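/- arXiv:1211.2481 — 4 statements merged into one kernel-verified Lean document; each statement's English description precedes it below -/
import Mathlib

section
/- Under a completely randomized assignment, for any two distinct treatment combinations z ≠ z*, Cov(Ȳ^obs(z), Ȳ^obs(z*)) = −(1/N) S²(z,z*). -/
open Finset

noncomputable section

/-- A treatment combination in a 2^K factorial design: each of the K factors
is at its low level (`false`, coded −1) or high level (`true`, coded +1). -/
abbrev Combo (K : ℕ) := Fin K → Bool

/-- The completely randomized assignments: each of the 2^K treatment
combinations receives exactly `r` of the `N` units. -/
def Assignments (K N r : ℕ) : Finset (Fin N → Combo K) :=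
  Finset.univ.filter (fun ω => ∀ z : Combo K, (Finset.univ.filter (fun i => ω i = z)).card = r)

/-- Expectation over the uniform distribution on completely randomized assignments. -/
def expect (K N r : ℕ) (f : (Fin N → Combo K) → ℝ) : ℝ :=
  (∑ ω ∈ Assignments K N r, f ω) / ((Assignments K N r).card : ℝ)

/-- Variance over the uniform distribution on completely randomized assignments. -/
def variance (K N r : ℕ) (f : (Fin N → Combo K) → ℝ) : ℝ :=
  expect K N r (fun ω => (f ω - expect K N r f) ^ 2)

/-- Covariance over the uniform distribution on completely randomized assignments. -/
def covariance (K N r : ℕ) (f g : (Fin N → Combo K) → ℝ) : ℝ :=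
  expect K N r (fun ω => (f ω - expect K N r f) * (g ω - expect K N r g))

/-- The assignment indicator W_i(z). -/
def Wvar (K N : ℕ) (ω : Fin N → Combo K) (i : Fin N) (z : Combo K) : ℝ :=
  if ω i = z then 1 else 0

/-- The population mean Ȳ(z) of the potential outcomes under z. -/
def Ybar (K N : ℕ) (Y : Fin N → Combo K → ℝ) (z : Combo K) : ℝ :=
  (∑ i, Y i z) / (N : ℝ)

/-- The observed treatment mean Ȳ^obs(z) = (1/r) Σ_{i : W_i(z)=1} Y_i(z). -/
def YbarObs (K N r : ℕ) (Y : Fin N → Combo K → ℝ)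
    (ω : Fin N → Combo K) (z : Combo K) : ℝ :=
  (∑ i, if ω i = z then Y i z else 0) / (r : ℝ)

/-- Finite-population variance S²(z) (divisor N−1). -/
def Ssq (K N : ℕ) (Y : Fin N → Combo K → ℝ) (z : Combo K) : ℝ :=
  (∑ i, (Y i z - Ybar K N Y z) ^ 2) / ((N : ℝ) - 1)

/-- Finite-population covariance S²(z, z*) (divisor N−1). -/
def Scov (K N : ℕ) (Y : Fin N → Combo K → ℝ) (z zs : Combo K) : ℝ :=
  (∑ i, (Y i z - Ybar K N Y z) * (Y i zs - Ybar K N Y zs)) / ((N : ℝ) - 1)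

/-- The contrast g_A(z) = Π_{k ∈ A} z_k ∈ {−1, +1}. -/
def gA (K : ℕ) (A : Finset (Fin K)) (z : Combo K) : ℝ :=
  ∏ k ∈ A, (if z k then (1 : ℝ) else -1)

/-- The unit-level factorial effect τ_{iA} = 2^{−(K−1)} Σ_z g_A(z) Y_i(z). -/
def tauUnit (K N : ℕ) (Y : Fin N → Combo K → ℝ) (A : Finset (Fin K)) (i : Fin N) : ℝ :=
  (∑ z : Combo K, gA K A z * Y i z) / (2 : ℝ) ^ (K - 1)

/-- The population-level factorial effect τ̄_A = (1/N) Σ_i τ_{iA}. -/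
def tauBar (K N : ℕ) (Y : Fin N → Combo K → ℝ) (A : Finset (Fin K)) : ℝ :=
  (∑ i, tauUnit K N Y A i) / (N : ℝ)

/-- The estimated factorial effect τ̂_A = 2^{−(K−1)} Σ_z g_A(z) Ȳ^obs(z). -/
def tauHat (K N r : ℕ) (Y : Fin N → Combo K → ℝ) (A : Finset (Fin K))
    (ω : Fin N → Combo K) : ℝ :=
  (∑ z : Combo K, gA K A z * YbarObs K N r Y ω z) / (2 : ℝ) ^ (K - 1)

/-- The finite-population variance S_A² of the unit-level factorial effects. -/
def SsqA (K N : ℕ) (Y : Fin N → Combo K → ℝ) (A : Finset (Fin K)) : ℝ :=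
  (∑ i, (tauUnit K N Y A i - tauBar K N Y A) ^ 2) / ((N : ℝ) - 1)

/-- Strict additivity: unit-level differences of potential outcomes between any
two treatment combinations are constant across units. -/
def StrictAdditivity (K N : ℕ) (Y : Fin N → Combo K → ℝ) : Prop :=
  ∀ z zs : Combo K, ∀ i i' : Fin N, Y i z - Y i zs = Y i' z - Y i' zs

/-- Compound symmetry: common variance S² > 0 and common correlation ρ,
i.e. S²(z) = S² for all z and S²(z,z*) = ρ S² for all z ≠ z*. -/
def CompoundSymmetry (K N : ℕ) (Y : Fin N → Combo K → ℝ) (S2 ρ : ℝ) : Prop :=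
  0 < S2 ∧ (∀ z : Combo K, Ssq K N Y z = S2) ∧
    ∀ z zs : Combo K, z ≠ zs → Scov K N Y z zs = ρ * S2

namespace CRDAux

variable {K N r : ℕ}

lemma mem_assignments {ω : Fin N → Combo K} :
    ω ∈ Assignments K N r ↔
      ∀ z : Combo K, (Finset.univ.filter (fun i => ω i = z)).card = r := by
  simp [Assignments]

lemma comp_perm_mem (σ : Equiv.Perm (Fin N)) {ω : Fin N → Combo K}
    (h : ω ∈ Assignments K N r) : ω ∘ σ ∈ Assignments K N r := by
  rw [mem_assignments] at h ⊢
  intro z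
  rw [← h z]
  apply Finset.card_bij (fun i _ => σ i)
  · intro a ha; simp only [Finset.mem_filter, Finset.mem_univ, true_and] at ha ⊢; exact ha
  · intro a _ b _ hab; exact σ.injective hab
  · intro b hb
    refine ⟨σ.symm b, ?_, by simp⟩
    simp only [Finset.mem_filter, Finset.mem_univ, true_and, Function.comp] at hb ⊢
    simpa using hb

lemma filter_card_perm (σ : Equiv.Perm (Fin N)) (p : (Fin N → Combo K) → Prop)
    [DecidablePred p] :
    ((Assignments K N r).filter (fun ω => p (ω ∘ σ))).card =
      ((Assignments K N r).filter p).card := by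
  apply Finset.card_bij (fun ω _ => ω ∘ σ)
  · intro ω hω
    simp only [Finset.mem_filter] at hω ⊢
    exact ⟨comp_perm_mem σ hω.1, hω.2⟩
  · intro a _ b _ hab
    funext x
    have := congrFun hab (σ.symm x)
    simpa using this
  · intro ω' hω'
    refine ⟨ω' ∘ ⇑σ.symm, ?_, ?_⟩
    · simp only [Finset.mem_filter] at hω' ⊢
      have hcomp : (ω' ∘ ⇑σ.symm) ∘ ⇑σ = ω' := by funext x; simp
      exact ⟨comp_perm_mem σ.symm hω'.1, by rw [hcomp]; exact hω'.2⟩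
    · funext x; simp

lemma exists_perm {α : Type*} [DecidableEq α] {i j i' j' : α} (h : i ≠ j) (h' : i' ≠ j') :
    ∃ σ : Equiv.Perm α, σ i' = i ∧ σ j' = j := by
  set σ₁ := Equiv.swap i' i with hσ₁
  refine ⟨σ₁.trans (Equiv.swap (σ₁ j') j), ?_, ?_⟩
  · have h1 : σ₁ i' = i := Equiv.swap_apply_left _ _
    have h2 : i ≠ σ₁ j' := by
      intro he
      exact h' (σ₁.injective (h1.trans he))
    simp only [Equiv.trans_apply, h1]
    rw [Equiv.swap_apply_of_ne_of_ne h2 h]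
  · simp only [Equiv.trans_apply]
    exact Equiv.swap_apply_left _ _

lemma card_single_const (i i' : Fin N) (z : Combo K) :
    ((Assignments K N r).filter (fun ω => ω i = z)).card =
      ((Assignments K N r).filter (fun ω => ω i' = z)).card := by
  have := filter_card_perm (K := K) (r := r) (Equiv.swap i i') (fun ω => ω i' = z)
  simpa [Function.comp, Equiv.swap_apply_right] using this

lemma card_pair_const {i j i' j' : Fin N} (hij : i ≠ j) (hij' : i' ≠ j') (z zs : Combo K) :
    ((Assignments K N r).filter (fun ω => ω i = z ∧ ω j = zs)).card =
      ((Assignments K N r).filter (fun ω => ω i' = z ∧ ω j' = zs)).card := by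
  obtain ⟨σ, h1, h2⟩ := exists_perm hij hij'
  have := filter_card_perm (K := K) (r := r) σ (fun ω => ω i' = z ∧ ω j' = zs)
  simpa [Function.comp, h1, h2] using this

lemma sum_card_single (z : Combo K) :
    ∑ i : Fin N, ((Assignments K N r).filter (fun ω => ω i = z)).card =
      (Assignments K N r).card * r := by
  calc ∑ i : Fin N, ((Assignments K N r).filter fun ω => ω i = z).card
      = ∑ i : Fin N, ∑ ω ∈ Assignments K N r, if ω i = z then 1 else 0 :=
        Finset.sum_congr rfl fun i _ => Finset.card_filter _ _
    _ = ∑ ω ∈ Assignments K N r, ∑ i : Fin N, if ω i = z then 1 else 0 :=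
        Finset.sum_comm
    _ = ∑ _ω ∈ Assignments K N r, r := by
        refine Finset.sum_congr rfl fun ω hω => ?_
        rw [← Finset.card_filter]
        exact mem_assignments.mp hω z
    _ = (Assignments K N r).card * r := by simp [mul_comm]

lemma sum_card_pair (z zs : Combo K) :
    ∑ i : Fin N, ∑ j : Fin N,
        ((Assignments K N r).filter (fun ω => ω i = z ∧ ω j = zs)).card =
      (Assignments K N r).card * (r * r) := by
  calc ∑ i : Fin N, ∑ j : Fin N,
        ((Assignments K N r).filter fun ω => ω i = z ∧ ω j = zs).card
      = ∑ i : Fin N, ∑ j : Fin N, ∑ ω ∈ Assignments K N r,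
          (if ω i = z then 1 else 0) * (if ω j = zs then 1 else 0) := by
        refine Finset.sum_congr rfl fun i _ => Finset.sum_congr rfl fun j _ => ?_
        rw [Finset.card_filter]
        refine Finset.sum_congr rfl fun ω _ => ?_
        split_ifs <;> simp_all
    _ = ∑ ω ∈ Assignments K N r, ∑ i : Fin N, ∑ j : Fin N,
          (if ω i = z then 1 else 0) * (if ω j = zs then 1 else 0) := by
        have h1 : ∀ i : Fin N, (∑ j : Fin N, ∑ ω ∈ Assignments K N r,
            (if ω i = z then 1 else 0) * (if ω j = zs then 1 else 0))
            = ∑ ω ∈ Assignments K N r, ∑ j : Fin N,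
              (if ω i = z then 1 else 0) * (if ω j = zs then 1 else 0) :=
          fun i => Finset.sum_comm
        simp_rw [h1]
        exact Finset.sum_comm
    _ = ∑ ω ∈ Assignments K N r,
          (∑ i : Fin N, if ω i = z then 1 else 0) *
            (∑ j : Fin N, if ω j = zs then 1 else 0) := by
        refine Finset.sum_congr rfl fun ω _ => ?_
        rw [Finset.sum_mul_sum]
    _ = ∑ _ω ∈ Assignments K N r, r * r := by
        refine Finset.sum_congr rfl fun ω hω => ?_
        rw [← Finset.card_filter, ← Finset.card_filter,
          mem_assignments.mp hω z, mem_assignments.mp hω zs]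
    _ = (Assignments K N r).card * (r * r) := by simp [mul_comm]

lemma card_diag_zero {z zs : Combo K} (hz : z ≠ zs) (i : Fin N) :
    ((Assignments K N r).filter (fun ω => ω i = z ∧ ω i = zs)).card = 0 := by
  rw [Finset.card_eq_zero, Finset.filter_eq_empty_iff]
  rintro ω _ ⟨h1, h2⟩
  exact hz (h1 ▸ h2)

lemma assignments_nonempty (hN : N = r * 2 ^ K) : (Assignments K N r).Nonempty := by
  have hcard : Fintype.card (Fin N) = Fintype.card (Fin r × Combo K) := by
    simp [hN, Fintype.card_fun]
  obtain e := Fintype.equivOfCardEq hcard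
  refine ⟨fun i => (e i).2, ?_⟩
  rw [mem_assignments]
  intro z
  have h1 : (Finset.univ.filter (fun i : Fin N => (e i).2 = z)).card =
      (Finset.univ.filter (fun p : Fin r × Combo K => p.2 = z)).card := by
    apply Finset.card_bij (fun i _ => e i)
    · intro a ha; simp only [Finset.mem_filter, Finset.mem_univ, true_and] at ha ⊢; exact ha
    · intro a _ b _ hab; exact e.injective hab
    · intro b hb
      refine ⟨e.symm b, ?_, by simp⟩
      simp only [Finset.mem_filter, Finset.mem_univ, true_and] at hb ⊢
      simpa using hb
  rw [h1]
  have h2 : (Finset.univ.filter (fun p : Fin r × Combo K => p.2 = z)) =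
      Finset.univ ×ˢ {z} := by
    ext p
    simp only [Finset.mem_filter, Finset.mem_univ, true_and, Finset.mem_product,
      Finset.mem_singleton]
  rw [h2]
  simp

end CRDAux

set_option maxHeartbeats 1000000 in
/-- For z ≠ z*, Cov(Ȳ^obs(z), Ȳ^obs(z*)) = −(1/N) S²(z,z*). -/
theorem ybarobs_covariance (K N r : ℕ) (hK : 1 ≤ K) (hr : 0 < r) (hN : N = r * 2 ^ K)
    (Y : Fin N → Combo K → ℝ) (z zs : Combo K) (hz : z ≠ zs) :
    covariance K N r (fun ω => YbarObs K N r Y ω z) (fun ω => YbarObs K N r Y ω zs) =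
      -(1 / (N : ℝ)) * Scov K N Y z zs := by
  classical
  open CRDAux in
  -- basic nonvanishing facts
  have hA : (Assignments K N r).Nonempty := assignments_nonempty hN
  set a : ℝ := ((Assignments K N r).card : ℝ) with ha
  have hAc : a ≠ 0 := by
    rw [ha]
    exact Nat.cast_ne_zero.mpr (Finset.card_pos.mpr hA).ne'
  have hN2 : 2 ≤ N := by
    have h1 : 2 ≤ 2 ^ K := by
      calc 2 = 2 ^ 1 := by norm_num
        _ ≤ 2 ^ K := Nat.pow_le_pow_right (by norm_num) hK
    calc 2 ≤ 2 ^ K := h1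
      _ ≤ r * 2 ^ K := Nat.le_mul_of_pos_left _ hr
      _ = N := hN.symm
  have hNR : (N : ℝ) ≠ 0 := by
    have : (0:ℝ) < N := by exact_mod_cast Nat.lt_of_lt_of_le (by norm_num) hN2
    linarith
  have hN1 : (N : ℝ) - 1 ≠ 0 := by
    have : (2:ℝ) ≤ N := by exact_mod_cast hN2
    intro h; linarith
  have hrR : (r : ℝ) ≠ 0 := by
    have : (0:ℝ) < r := by exact_mod_cast hr
    linarith
  -- the count of assignments with a prescribed value at one unit
  have key1 : ∀ (i : Fin N) (w : Combo K),
      (((Assignments K N r).filter (fun ω => ω i = w)).card : ℝ) = a * r / N := by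
    intro i w
    have h1 : ∑ i' : Fin N, ((Assignments K N r).filter (fun ω => ω i' = w)).card
        = N * ((Assignments K N r).filter (fun ω => ω i = w)).card := by
      rw [Finset.sum_congr rfl (fun i' _ => card_single_const i' i w)]
      simp [mul_comm]
    have h2 := sum_card_single (K := K) (N := N) (r := r) w
    rw [h1] at h2
    have h3 : (N : ℝ) * (((Assignments K N r).filter (fun ω => ω i = w)).card : ℝ)
        = a * r := by rw [ha]; exact_mod_cast h2
    field_simp [hAc, hrR, hNR, hN1]
    linarith [h3]
  -- the count of assignments with prescribed distinct values at two distinct units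
  have key2 : ∀ (i j : Fin N), i ≠ j →
      (((Assignments K N r).filter (fun ω => ω i = z ∧ ω j = zs)).card : ℝ)
        = a * (r * r) / ((N:ℝ) * ((N:ℝ) - 1)) := by
    intro i j hij
    set c : ℝ := (((Assignments K N r).filter (fun ω => ω i = z ∧ ω j = zs)).card : ℝ)
      with hc
    have hsum := sum_card_pair (K := K) (N := N) (r := r) z zs
    have hsumR : ∑ i' : Fin N, ∑ j' : Fin N,
        (((Assignments K N r).filter (fun ω => ω i' = z ∧ ω j' = zs)).card : ℝ)
        = a * (r * r) := by rw [ha]; exact_mod_cast hsum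
    have hval : ∀ i' j' : Fin N,
        (((Assignments K N r).filter (fun ω => ω i' = z ∧ ω j' = zs)).card : ℝ)
          = if i' = j' then 0 else c := by
      intro i' j'
      split_ifs with h
      · subst h; exact_mod_cast card_diag_zero hz i'
      · exact_mod_cast congrArg _ (card_pair_const h hij z zs)
    simp_rw [hval] at hsumR
    have hrow : ∀ i' : Fin N,
        ∑ j' : Fin N, (if i' = j' then (0:ℝ) else c) = (N:ℝ) * c - c := by
      intro i'
      have h : ∀ j' : Fin N,
          (if i' = j' then (0:ℝ) else c) = c - (if i' = j' then c else 0) := by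
        intro j'; split_ifs <;> ring
      simp_rw [h, Finset.sum_sub_distrib, Finset.sum_const, Finset.sum_ite_eq,
        Finset.card_univ, Fintype.card_fin, Finset.mem_univ, if_true, nsmul_eq_mul]
    simp_rw [hrow, Finset.sum_const, Finset.card_univ, Fintype.card_fin,
      nsmul_eq_mul] at hsumR
    have hNN : (N:ℝ) * ((N:ℝ) - 1) ≠ 0 := mul_ne_zero hNR hN1
    rw [eq_div_iff hNN]
    calc c * ((N:ℝ) * ((N:ℝ) - 1)) = (N:ℝ) * ((N:ℝ) * c - c) := by ring
      _ = a * (r * r) := hsumR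
  -- summing an indicator against a constant over assignments
  have hsum_ind : ∀ (p : (Fin N → Combo K) → Prop) [DecidablePred p] (y : ℝ),
      ∑ ω ∈ Assignments K N r, (if p ω then y else 0)
        = (((Assignments K N r).filter p).card : ℝ) * y := by
    intro p _ y
    rw [← Finset.sum_filter, Finset.sum_const, nsmul_eq_mul]
  -- expectation of the observed means
  have hEf : ∀ w : Combo K,
      _root_.expect K N r (fun ω => YbarObs K N r Y ω w) = (∑ i, Y i w) / N := by
    intro w
    unfold _root_.expect YbarObs
    rw [← Finset.sum_div]
    have h1 : ∑ ω ∈ Assignments K N r, ∑ i, (if ω i = w then Y i w else 0)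
        = ∑ i, (((Assignments K N r).filter (fun ω => ω i = w)).card : ℝ) * Y i w := by
      rw [Finset.sum_comm]
      exact Finset.sum_congr rfl fun i _ => hsum_ind _ _
    rw [h1]
    have h2 : ∑ i, (((Assignments K N r).filter (fun ω => ω i = w)).card : ℝ) * Y i w
        = (a * r / N) * ∑ i, Y i w := by
      rw [Finset.mul_sum]
      exact Finset.sum_congr rfl fun i _ => by rw [key1 i w]
    rw [h2]
    field_simp [hAc, hrR, hNR, hN1]
    ring
  -- expectation of the product of the observed means
  set Sa : ℝ := ∑ i, Y i z with hSa
  set Sb : ℝ := ∑ i, Y i zs with hSb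
  set P : ℝ := ∑ i, Y i z * Y i zs with hP
  have hEfg : _root_.expect K N r
      (fun ω => YbarObs K N r Y ω z * YbarObs K N r Y ω zs)
        = (Sa * Sb - P) / ((N:ℝ) * ((N:ℝ) - 1)) := by
    unfold _root_.expect YbarObs
    have h1 : ∀ ω : Fin N → Combo K,
        ((∑ i, if ω i = z then Y i z else 0) / (r:ℝ)) *
          ((∑ j, if ω j = zs then Y j zs else 0) / (r:ℝ))
        = (∑ i, ∑ j, (if ω i = z ∧ ω j = zs then Y i z * Y j zs else 0))
            / ((r:ℝ) * (r:ℝ)) := by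
      intro ω
      rw [div_mul_div_comm, Finset.sum_mul_sum]
      congr 1
      refine Finset.sum_congr rfl fun i _ => Finset.sum_congr rfl fun j _ => ?_
      split_ifs with h1 h2 h3 <;> simp_all
    simp_rw [h1]
    rw [← Finset.sum_div]
    have h2 : ∑ ω ∈ Assignments K N r,
        ∑ i, ∑ j, (if ω i = z ∧ ω j = zs then Y i z * Y j zs else 0)
        = ∑ i, ∑ j,
            (((Assignments K N r).filter (fun ω => ω i = z ∧ ω j = zs)).card : ℝ)
              * (Y i z * Y j zs) := by
      rw [Finset.sum_comm]
      refine Finset.sum_congr rfl fun i _ => ?_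
      rw [Finset.sum_comm]
      exact Finset.sum_congr rfl fun j _ => hsum_ind _ _
    rw [h2]
    have h3 : ∀ i j : Fin N,
        (((Assignments K N r).filter (fun ω => ω i = z ∧ ω j = zs)).card : ℝ)
          * (Y i z * Y j zs)
        = if i = j then 0
          else (a * (r * r) / ((N:ℝ) * ((N:ℝ) - 1))) * (Y i z * Y j zs) := by
      intro i j
      split_ifs with h
      · subst h
        have := card_diag_zero (K := K) (r := r) hz i
        rw [show (((Assignments K N r).filter
            (fun ω => ω i = z ∧ ω i = zs)).card : ℝ) = 0 by exact_mod_cast this]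
        ring
      · rw [key2 i j h]
    simp_rw [h3]
    have hdouble : ∀ (w : Fin N → Fin N → ℝ),
        ∑ i, ∑ j, (if i = j then (0:ℝ) else w i j)
          = (∑ i, ∑ j, w i j) - ∑ i, w i i := by
      intro w
      have h : ∀ i j : Fin N,
          (if i = j then (0:ℝ) else w i j) = w i j - (if i = j then w i j else 0) := by
        intro i j; split_ifs <;> ring
      simp_rw [h, Finset.sum_sub_distrib, Finset.sum_ite_eq, Finset.mem_univ, if_true]
    rw [hdouble]
    have h4 : ∑ i, ∑ j, (a * (r * r) / ((N:ℝ) * ((N:ℝ) - 1))) * (Y i z * Y j zs)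
        = (a * (r * r) / ((N:ℝ) * ((N:ℝ) - 1))) * (Sa * Sb) := by
      rw [hSa, hSb, Finset.sum_mul_sum, Finset.mul_sum]
      refine Finset.sum_congr rfl fun i _ => ?_
      rw [Finset.mul_sum]
    have h5 : ∑ i, (a * (r * r) / ((N:ℝ) * ((N:ℝ) - 1))) * (Y i z * Y i zs)
        = (a * (r * r) / ((N:ℝ) * ((N:ℝ) - 1))) * P := by
      rw [← Finset.mul_sum, hP]
    rw [h4, h5]
    field_simp [hAc, hrR, hNR, hN1]
    ring
  -- covariance in terms of expectations
  have hcov : ∀ f g : (Fin N → Combo K) → ℝ,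
      covariance K N r f g
        = _root_.expect K N r (fun ω => f ω * g ω) - _root_.expect K N r f * _root_.expect K N r g := by
    intro f g
    unfold covariance _root_.expect
    set Sf : ℝ := ∑ ω ∈ Assignments K N r, f ω with hSf
    set Sg : ℝ := ∑ ω ∈ Assignments K N r, g ω with hSg
    have h1 : ∀ ω : Fin N → Combo K,
        (f ω - Sf / a) * (g ω - Sg / a)
          = f ω * g ω - (Sg / a) * f ω - (Sf / a) * g ω + (Sf / a) * (Sg / a) := by
      intro ω; ring
    rw [← ha]
    simp_rw [h1, Finset.sum_add_distrib, Finset.sum_sub_distrib, ← Finset.mul_sum,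
      Finset.sum_const, nsmul_eq_mul, ← hSf, ← hSg, ← ha]
    field_simp [hAc, hrR, hNR, hN1]
    ring
  rw [hcov, hEfg, hEf z, hEf zs]
  unfold Scov Ybar
  have hS : ∑ i, (Y i z - Sa / N) * (Y i zs - Sb / N) = P - Sa * Sb / N := by
    have h1 : ∀ i : Fin N, (Y i z - Sa / N) * (Y i zs - Sb / N)
        = Y i z * Y i zs - (Sb / N) * Y i z - (Sa / N) * Y i zs
            + (Sa / N) * (Sb / N) := by
      intro i; ring
    simp_rw [h1, Finset.sum_add_distrib, Finset.sum_sub_distrib, ← Finset.mul_sum,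
      Finset.sum_const, Finset.card_univ, Fintype.card_fin, nsmul_eq_mul,
      ← hSa, ← hSb, ← hP]
    field_simp [hAc, hrR, hNR, hN1]
    ring
  rw [← hSa, ← hSb, hS]
  field_simp [hAc, hrR, hNR, hN1]
  ring
end
end

section
/- For a completely randomized assignment and any nonempty subset A ⊆ {1,…,K}, the sampling variance of the estimated factorial effect is Var(τ̂_A) = (1/(2^{2(K−1)} r)) Σ_z S²(z) − (1/N) S_A², where the sum is over all 2^K treatment combinations z. -/
open Finset

noncomputable section

namespace CRD
variable {K N r : ℕ}

lemma mem_assignments {ω : Fin N → Combo K} :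
    ω ∈ Assignments K N r ↔ ∀ z : Combo K, (Finset.univ.filter (fun i => ω i = z)).card = r := by
  simp [Assignments]

lemma comp_mem (σ : Equiv.Perm (Fin N)) {ω : Fin N → Combo K}
    (hω : ω ∈ Assignments K N r) : (ω ∘ σ) ∈ Assignments K N r := by
  rw [mem_assignments] at hω ⊢
  intro z
  rw [← hω z]
  exact Finset.card_equiv σ (by simp)

lemma sum_comp (σ : Equiv.Perm (Fin N)) (F : (Fin N → Combo K) → ℝ) :
    ∑ ω ∈ Assignments K N r, F (ω ∘ σ) = ∑ ω ∈ Assignments K N r, F ω := by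
  refine Finset.sum_nbij' (fun ω => ω ∘ σ) (fun ω => ω ∘ σ.symm) ?_ ?_ ?_ ?_ ?_
  · intro ω hω; exact comp_mem σ hω
  · intro ω hω; exact comp_mem σ.symm hω
  · intro ω hω; funext x; simp
  · intro ω hω; funext x; simp
  · intro ω hω; rfl

/-- For ω in the assignment set, the indicator sums over units to r. -/
lemma sum_W_units {ω : Fin N → Combo K} (hω : ω ∈ Assignments K N r) (z : Combo K) :
    ∑ j, Wvar K N ω j z = (r : ℝ) := by
  rw [mem_assignments] at hω
  unfold Wvar
  rw [Finset.sum_boole, hω z]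

lemma sum_W_swap (i j : Fin N) (z : Combo K) :
    ∑ ω ∈ Assignments K N r, Wvar K N ω i z = ∑ ω ∈ Assignments K N r, Wvar K N ω j z := by
  have h := sum_comp (r := r) (Equiv.swap i j) (fun ω => Wvar K N ω j z)
  rw [← h]
  apply Finset.sum_congr rfl
  intro ω _
  simp [Wvar, Function.comp, Equiv.swap_apply_right]

/-- First moment count. -/
lemma sum_W_one (hN0 : 0 < N) (i : Fin N) (z : Combo K) :
    ∑ ω ∈ Assignments K N r, Wvar K N ω i z
      = (r : ℝ) * ((Assignments K N r).card : ℝ) / (N : ℝ) := by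
  have hN0' : (N : ℝ) ≠ 0 := Nat.cast_ne_zero.mpr hN0.ne'
  have h1 : (N : ℝ) * ∑ ω ∈ Assignments K N r, Wvar K N ω i z
      = (r : ℝ) * ((Assignments K N r).card : ℝ) := by
    calc (N : ℝ) * ∑ ω ∈ Assignments K N r, Wvar K N ω i z
        = ∑ j : Fin N, ∑ ω ∈ Assignments K N r, Wvar K N ω j z := by
          rw [Finset.sum_congr rfl (fun j _ => sum_W_swap j i z), Finset.sum_const,
            Finset.card_univ, Fintype.card_fin, nsmul_eq_mul]
      _ = ∑ ω ∈ Assignments K N r, ∑ j : Fin N, Wvar K N ω j z := Finset.sum_comm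
      _ = ∑ ω ∈ Assignments K N r, (r : ℝ) := by
          exact Finset.sum_congr rfl (fun ω hω => sum_W_units hω z)
      _ = (r : ℝ) * ((Assignments K N r).card : ℝ) := by
          rw [Finset.sum_const, nsmul_eq_mul, mul_comm]
  rw [eq_div_iff hN0']
  linarith [h1]

lemma exists_perm_pair {i j i' j' : Fin N} (hij : i ≠ j) (hij' : i' ≠ j') :
    ∃ σ : Equiv.Perm (Fin N), σ i = i' ∧ σ j = j' := by
  refine ⟨(Equiv.swap i i').trans (Equiv.swap (Equiv.swap i i' j) j'), ?_, ?_⟩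
  · have h1 : Equiv.swap i i' j ≠ i' := by
      intro h
      exact hij (Equiv.injective _ (by rw [h, Equiv.swap_apply_left]))
    simp only [Equiv.trans_apply, Equiv.swap_apply_left]
    exact Equiv.swap_apply_of_ne_of_ne h1.symm hij'
  · simp only [Equiv.trans_apply, Equiv.swap_apply_left]

lemma sum_W_pair_indep {i j i' j' : Fin N} (hij : i ≠ j) (hij' : i' ≠ j') (z z' : Combo K) :
    ∑ ω ∈ Assignments K N r, Wvar K N ω i z * Wvar K N ω j z'
      = ∑ ω ∈ Assignments K N r, Wvar K N ω i' z * Wvar K N ω j' z' := by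
  obtain ⟨σ, h1, h2⟩ := exists_perm_pair hij' hij
  have h := sum_comp (r := r) σ (fun ω => Wvar K N ω i' z * Wvar K N ω j' z')
  rw [← h]
  apply Finset.sum_congr rfl
  intro ω _
  simp [Wvar, Function.comp, h1, h2]

lemma W_mul_W_diag (ω : Fin N → Combo K) (i : Fin N) (z z' : Combo K) :
    Wvar K N ω i z * Wvar K N ω i z' = if z = z' then Wvar K N ω i z else 0 := by
  unfold Wvar
  by_cases hz : z = z'
  · subst hz; split <;> simp
  · by_cases h : ω i = z
    · have h' : ω i ≠ z' := by rw [h]; exact hz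
      simp [h, h', hz]
    · simp [h, hz]

/-- For fixed ω ∈ Assignments, off-diagonal pair sum of indicators. -/
lemma pair_sum_fixed {ω : Fin N → Combo K} (hω : ω ∈ Assignments K N r) (z z' : Combo K) :
    ∑ i, ∑ j ∈ univ.erase i, Wvar K N ω i z * Wvar K N ω j z'
      = (r : ℝ) * (r : ℝ) - (if z = z' then (r : ℝ) else 0) := by
  have h1 : ∀ i : Fin N, ∑ j ∈ univ.erase i, Wvar K N ω i z * Wvar K N ω j z'
      = Wvar K N ω i z * (r : ℝ) - Wvar K N ω i z * Wvar K N ω i z' := by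
    intro i
    rw [Finset.sum_erase_eq_sub (Finset.mem_univ i), ← Finset.mul_sum, sum_W_units hω z']
  rw [Finset.sum_congr rfl (fun i _ => h1 i), Finset.sum_sub_distrib]
  have h2 : ∑ i, Wvar K N ω i z * (r : ℝ) = (r : ℝ) * (r : ℝ) := by
    rw [← Finset.sum_mul, sum_W_units hω z]
  have h3 : ∑ i, Wvar K N ω i z * Wvar K N ω i z' = if z = z' then (r : ℝ) else 0 := by
    rw [Finset.sum_congr rfl (fun i _ => W_mul_W_diag ω i z z')]
    by_cases h : z = z'
    · simp only [h, if_true]; exact sum_W_units hω z'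
    · simp [h]
  rw [h2, h3]

/-- Second moment count. -/
lemma sum_W_two (hN2 : 2 ≤ N) {i j : Fin N} (hij : i ≠ j) (z z' : Combo K) :
    ∑ ω ∈ Assignments K N r, Wvar K N ω i z * Wvar K N ω j z'
      = ((r : ℝ) * (r : ℝ) - (if z = z' then (r : ℝ) else 0))
          * ((Assignments K N r).card : ℝ) / ((N : ℝ) * ((N : ℝ) - 1)) := by
  have hN0' : (N : ℝ) ≠ 0 := by
    have : 0 < N := lt_of_lt_of_le (by norm_num) hN2
    exact Nat.cast_ne_zero.mpr this.ne'
  have hN1' : (N : ℝ) - 1 ≠ 0 := by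
    have : (2 : ℝ) ≤ (N : ℝ) := by exact_mod_cast hN2
    linarith
  set T := ∑ ω ∈ Assignments K N r, Wvar K N ω i z * Wvar K N ω j z' with hT
  have h1 : ∑ i' : Fin N, ∑ j' ∈ univ.erase i',
      (∑ ω ∈ Assignments K N r, Wvar K N ω i' z * Wvar K N ω j' z')
      = (N : ℝ) * ((N : ℝ) - 1) * T := by
    have hterm : ∀ i' : Fin N, ∀ j' ∈ univ.erase i',
        (∑ ω ∈ Assignments K N r, Wvar K N ω i' z * Wvar K N ω j' z') = T := by
      intro i' j' hj'
      have hji : i' ≠ j' := fun h => (Finset.mem_erase.mp hj').1 h.symm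
      exact sum_W_pair_indep hji hij z z'
    calc ∑ i' : Fin N, ∑ j' ∈ univ.erase i',
        (∑ ω ∈ Assignments K N r, Wvar K N ω i' z * Wvar K N ω j' z')
        = ∑ i' : Fin N, ((N - 1 : ℕ) : ℝ) * T := by
          apply Finset.sum_congr rfl
          intro i' _
          rw [Finset.sum_congr rfl (hterm i'), Finset.sum_const, nsmul_eq_mul,
            Finset.card_erase_of_mem (Finset.mem_univ i'), Finset.card_univ, Fintype.card_fin]
      _ = (N : ℝ) * ((N : ℝ) - 1) * T := by
          rw [Finset.sum_const, nsmul_eq_mul, Finset.card_univ, Fintype.card_fin]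
          rw [Nat.cast_sub (le_trans (by norm_num) hN2), Nat.cast_one]
          ring
  have h2 : ∑ i' : Fin N, ∑ j' ∈ univ.erase i',
      (∑ ω ∈ Assignments K N r, Wvar K N ω i' z * Wvar K N ω j' z')
      = ((r : ℝ) * (r : ℝ) - (if z = z' then (r : ℝ) else 0))
          * ((Assignments K N r).card : ℝ) := by
    calc ∑ i' : Fin N, ∑ j' ∈ univ.erase i',
        (∑ ω ∈ Assignments K N r, Wvar K N ω i' z * Wvar K N ω j' z')
        = ∑ ω ∈ Assignments K N r, ∑ i' : Fin N, ∑ j' ∈ univ.erase i',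
            Wvar K N ω i' z * Wvar K N ω j' z' := by
          rw [Finset.sum_comm]
          apply Finset.sum_congr rfl
          intro ω _
          exact Finset.sum_comm
      _ = ∑ ω ∈ Assignments K N r,
            ((r : ℝ) * (r : ℝ) - (if z = z' then (r : ℝ) else 0)) := by
          exact Finset.sum_congr rfl (fun ω hω => pair_sum_fixed hω z z')
      _ = ((r : ℝ) * (r : ℝ) - (if z = z' then (r : ℝ) else 0))
            * ((Assignments K N r).card : ℝ) := by
          rw [Finset.sum_const, nsmul_eq_mul, mul_comm]
  rw [eq_div_iff (mul_ne_zero hN0' hN1')]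
  rw [h2] at h1
  linarith [h1]

end CRD

namespace CRD
variable {K N r : ℕ}

/-- The set of completely randomized assignments is nonempty. -/
lemma assignments_nonempty (hN : N = r * 2 ^ K) : (Assignments K N r).Nonempty := by
  have hcard : Fintype.card (Fin r × Combo K) = N := by
    simp [hN, Fintype.card_fun]
  obtain e := Fintype.equivOfCardEq (α := Fin N) (β := Fin r × Combo K)
    (by rw [hcard, Fintype.card_fin])
  refine ⟨fun i => (e i).2, ?_⟩
  rw [mem_assignments]
  intro z
  have h1 : (univ.filter fun i : Fin N => (e i).2 = z).card
      = (univ.filter fun p : Fin r × Combo K => p.2 = z).card :=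
    Finset.card_equiv e (by simp)
  have h2 : (univ.filter fun p : Fin r × Combo K => p.2 = z) = univ ×ˢ {z} := by
    ext ⟨a, b⟩
    simp [Finset.mem_product, Prod.ext_iff, eq_comm]
  rw [h1, h2, Finset.card_product]
  simp

lemma expect_sum {ι : Type*} (s : Finset ι) (F : ι → (Fin N → Combo K) → ℝ) :
    expect K N r (fun ω => ∑ x ∈ s, F x ω) = ∑ x ∈ s, expect K N r (F x) := by
  unfold _root_.expect
  rw [Finset.sum_comm, Finset.sum_div]

lemma expect_const_mul (c : ℝ) (f : (Fin N → Combo K) → ℝ) :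
    expect K N r (fun ω => c * f ω) = c * expect K N r f := by
  unfold _root_.expect
  rw [← Finset.mul_sum, mul_div_assoc]

lemma variance_expand (hne : (Assignments K N r).Nonempty) (f : (Fin N → Combo K) → ℝ) :
    expect K N r (fun ω => (f ω - expect K N r f) ^ 2)
      = expect K N r (fun ω => f ω * f ω) - expect K N r f * expect K N r f := by
  have hM0 : ((Assignments K N r).card : ℝ) ≠ 0 :=
    Nat.cast_ne_zero.mpr (Finset.card_ne_zero_of_mem hne.choose_spec)
  unfold _root_.expect
  set M := ((Assignments K N r).card : ℝ)
  set E := (∑ ω ∈ Assignments K N r, f ω) / M with hE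
  have hsum : ∑ ω ∈ Assignments K N r, f ω = E * M := by
    rw [hE, div_mul_cancel₀ _ hM0]
  have hexp : ∀ ω : Fin N → Combo K, (f ω - E) ^ 2 = f ω * f ω - 2 * E * f ω + E ^ 2 := by
    intro ω; ring
  rw [Finset.sum_congr rfl (fun ω _ => hexp ω)]
  rw [Finset.sum_add_distrib, Finset.sum_sub_distrib, ← Finset.mul_sum, hsum,
    Finset.sum_const, nsmul_eq_mul]
  field_simp
  ring

lemma YbarObs_eq_sum (Y : Fin N → Combo K → ℝ) (ω : Fin N → Combo K) (z : Combo K) :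
    YbarObs K N r Y ω z = (∑ i, Wvar K N ω i z * Y i z) / (r : ℝ) := by
  unfold YbarObs Wvar
  congr 1
  apply Finset.sum_congr rfl
  intro i _
  split <;> simp

lemma centered_sum (hN0 : (N : ℝ) ≠ 0) (Y : Fin N → Combo K → ℝ) (z z' : Combo K) :
    ∑ i, (Y i z - Ybar K N Y z) * (Y i z' - Ybar K N Y z')
      = (∑ i, Y i z * Y i z') - (∑ i, Y i z) * (∑ i, Y i z') / (N : ℝ) := by
  have hexp : ∀ i : Fin N, (Y i z - Ybar K N Y z) * (Y i z' - Ybar K N Y z')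
      = Y i z * Y i z' - Ybar K N Y z * Y i z' - Ybar K N Y z' * Y i z
        + Ybar K N Y z * Ybar K N Y z' := by
    intro i; ring
  rw [Finset.sum_congr rfl fun i _ => hexp i]
  rw [Finset.sum_add_distrib, Finset.sum_sub_distrib, Finset.sum_sub_distrib,
    ← Finset.mul_sum, ← Finset.mul_sum, Finset.sum_const, Finset.card_univ,
    Fintype.card_fin, nsmul_eq_mul]
  unfold Ybar
  field_simp
  ring

lemma Ssq_eq (hN0 : (N : ℝ) ≠ 0) (Y : Fin N → Combo K → ℝ) (z : Combo K) :
    Ssq K N Y z = ((∑ i, Y i z * Y i z) - (∑ i, Y i z) * (∑ i, Y i z) / (N : ℝ))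
      / ((N : ℝ) - 1) := by
  unfold Ssq
  rw [Finset.sum_congr rfl (fun i _ => sq (Y i z - Ybar K N Y z)),
    centered_sum hN0 Y z z]

lemma N_ge_two (hK : 1 ≤ K) (hr : 0 < r) (hN : N = r * 2 ^ K) : 2 ≤ N := by
  rw [hN]
  calc 2 = 1 * 2 ^ 1 := by norm_num
    _ ≤ r * 2 ^ K := Nat.mul_le_mul hr (Nat.pow_le_pow_right (by norm_num) hK)

lemma expect_YbarObs (hK : 1 ≤ K) (hr : 0 < r) (hN : N = r * 2 ^ K)
    (Y : Fin N → Combo K → ℝ) (z : Combo K) :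
    expect K N r (fun ω => YbarObs K N r Y ω z) = Ybar K N Y z := by
  have hN2 := N_ge_two hK hr hN
  have hN0 : 0 < N := lt_of_lt_of_le (by norm_num) hN2
  have hN0' : (N : ℝ) ≠ 0 := Nat.cast_ne_zero.mpr hN0.ne'
  have hr0' : (r : ℝ) ≠ 0 := Nat.cast_ne_zero.mpr hr.ne'
  have hM0 : ((Assignments K N r).card : ℝ) ≠ 0 :=
    Nat.cast_ne_zero.mpr (Finset.card_ne_zero_of_mem (assignments_nonempty hN).choose_spec)
  unfold _root_.expect
  set M := ((Assignments K N r).card : ℝ) with hM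
  have key : ∑ ω ∈ Assignments K N r, YbarObs K N r Y ω z
      = ((∑ i, Y i z) * ((r : ℝ) * M / (N : ℝ))) / (r : ℝ) := by
    calc ∑ ω ∈ Assignments K N r, YbarObs K N r Y ω z
        = ∑ ω ∈ Assignments K N r, (∑ i, Wvar K N ω i z * Y i z) / (r : ℝ) := by
          exact Finset.sum_congr rfl fun ω _ => YbarObs_eq_sum Y ω z
      _ = (∑ ω ∈ Assignments K N r, ∑ i, Wvar K N ω i z * Y i z) / (r : ℝ) := by
          rw [Finset.sum_div]
      _ = (∑ i, ∑ ω ∈ Assignments K N r, Wvar K N ω i z * Y i z) / (r : ℝ) := by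
          rw [Finset.sum_comm]
      _ = (∑ i, Y i z * ((r : ℝ) * M / (N : ℝ))) / (r : ℝ) := by
          congr 1
          apply Finset.sum_congr rfl
          intro i _
          rw [← Finset.sum_mul, sum_W_one hN0 i z, mul_comm]
      _ = ((∑ i, Y i z) * ((r : ℝ) * M / (N : ℝ))) / (r : ℝ) := by
          rw [← Finset.sum_mul]
  rw [key]
  unfold Ybar
  field_simp

lemma cov_YbarObs (hK : 1 ≤ K) (hr : 0 < r) (hN : N = r * 2 ^ K)
    (Y : Fin N → Combo K → ℝ) (z z' : Combo K) :
    expect K N r (fun ω => YbarObs K N r Y ω z * YbarObs K N r Y ω z')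
        - Ybar K N Y z * Ybar K N Y z'
      = -(1 / (N : ℝ)) * Scov K N Y z z'
        + (if z = z' then (1 / (r : ℝ)) * Ssq K N Y z else 0) := by
  have hN2 := N_ge_two hK hr hN
  have hN0 : 0 < N := lt_of_lt_of_le (by norm_num) hN2
  have hN0' : (N : ℝ) ≠ 0 := Nat.cast_ne_zero.mpr hN0.ne'
  have hN1' : (N : ℝ) - 1 ≠ 0 := by
    have : (2 : ℝ) ≤ (N : ℝ) := by exact_mod_cast hN2
    linarith
  have hr0' : (r : ℝ) ≠ 0 := Nat.cast_ne_zero.mpr hr.ne'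
  have hM0 : ((Assignments K N r).card : ℝ) ≠ 0 :=
    Nat.cast_ne_zero.mpr (Finset.card_ne_zero_of_mem (assignments_nonempty hN).choose_spec)
  set M := ((Assignments K N r).card : ℝ) with hM
  set Q := ∑ i, Y i z * Y i z' with hQ
  set Sz := ∑ i, Y i z with hSz
  set Sz' := ∑ i, Y i z' with hSz'
  set δ : ℝ := if z = z' then 1 else 0 with hδ
  clear_value δ
  have hdiag : ∀ i : Fin N, ∑ ω ∈ Assignments K N r, Wvar K N ω i z * Wvar K N ω i z'
      = δ * ((r : ℝ) * M / (N : ℝ)) := by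
    intro i
    rw [Finset.sum_congr rfl fun ω _ => W_mul_W_diag ω i z z']
    by_cases h : z = z'
    · simp only [if_pos h]
      rw [sum_W_one hN0 i z, hδ, if_pos h, one_mul]
    · simp [h, hδ]
  have hoff : ∀ i : Fin N, ∀ j ∈ univ.erase i,
      ∑ ω ∈ Assignments K N r, Wvar K N ω i z * Wvar K N ω j z'
        = ((r : ℝ) * (r : ℝ) - δ * (r : ℝ)) * M / ((N : ℝ) * ((N : ℝ) - 1)) := by
    intro i j hj
    have hji : i ≠ j := fun h => (Finset.mem_erase.mp hj).1 h.symm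
    rw [sum_W_two hN2 hji z z']
    congr 2
    by_cases h : z = z' <;> simp [h, hδ]
  have key : ∑ ω ∈ Assignments K N r,
      (∑ i, Wvar K N ω i z * Y i z) * (∑ j, Wvar K N ω j z' * Y j z')
      = δ * ((r : ℝ) * M / (N : ℝ)) * Q
        + ((r : ℝ) * (r : ℝ) - δ * (r : ℝ)) * M / ((N : ℝ) * ((N : ℝ) - 1))
            * (Sz * Sz' - Q) := by
    calc ∑ ω ∈ Assignments K N r,
        (∑ i, Wvar K N ω i z * Y i z) * (∑ j, Wvar K N ω j z' * Y j z')
        = ∑ ω ∈ Assignments K N r, ∑ i, ∑ j,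
            Y i z * Y j z' * (Wvar K N ω i z * Wvar K N ω j z') := by
          apply Finset.sum_congr rfl
          intro ω _
          rw [Finset.sum_mul_sum]
          exact Finset.sum_congr rfl fun i _ => Finset.sum_congr rfl fun j _ => by ring
      _ = ∑ i, ∑ j, ∑ ω ∈ Assignments K N r,
            Y i z * Y j z' * (Wvar K N ω i z * Wvar K N ω j z') := by
          rw [Finset.sum_comm]
          exact Finset.sum_congr rfl fun i _ => Finset.sum_comm
      _ = ∑ i, ∑ j, Y i z * Y j z'
            * (∑ ω ∈ Assignments K N r, Wvar K N ω i z * Wvar K N ω j z') := by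
          exact Finset.sum_congr rfl fun i _ => Finset.sum_congr rfl fun j _ =>
            (Finset.mul_sum _ _ _).symm
      _ = ∑ i, (Y i z * Y i z' * (δ * ((r : ℝ) * M / (N : ℝ)))
            + ∑ j ∈ univ.erase i, Y i z * Y j z'
              * (((r : ℝ) * (r : ℝ) - δ * (r : ℝ)) * M / ((N : ℝ) * ((N : ℝ) - 1)))) := by
          apply Finset.sum_congr rfl
          intro i _
          rw [← Finset.add_sum_erase _ _ (Finset.mem_univ i), hdiag i]
          congr 1
          exact Finset.sum_congr rfl fun j hj => by rw [hoff i j hj]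
      _ = δ * ((r : ℝ) * M / (N : ℝ)) * Q
            + ((r : ℝ) * (r : ℝ) - δ * (r : ℝ)) * M / ((N : ℝ) * ((N : ℝ) - 1))
                * (Sz * Sz' - Q) := by
          rw [Finset.sum_add_distrib, ← Finset.sum_mul, mul_comm]
          congr 1
          have h5 : ∀ i : Fin N, ∑ j ∈ univ.erase i, Y i z * Y j z'
              * (((r : ℝ) * (r : ℝ) - δ * (r : ℝ)) * M / ((N : ℝ) * ((N : ℝ) - 1)))
              = Y i z * (Sz' - Y i z')
                * (((r : ℝ) * (r : ℝ) - δ * (r : ℝ)) * M / ((N : ℝ) * ((N : ℝ) - 1))) := by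
            intro i
            rw [← Finset.sum_mul, ← Finset.mul_sum,
              Finset.sum_erase_eq_sub (Finset.mem_univ i)]
          rw [Finset.sum_congr rfl fun i _ => h5 i, ← Finset.sum_mul]
          have h6 : ∑ i, Y i z * (Sz' - Y i z') = Sz * Sz' - Q := by
            rw [Finset.sum_congr rfl fun i (_ : i ∈ univ) =>
              (by ring : Y i z * (Sz' - Y i z') = Y i z * Sz' - Y i z * Y i z'),
              Finset.sum_sub_distrib, ← Finset.sum_mul]
          rw [h6]
          ring
  have hexp : expect K N r (fun ω => YbarObs K N r Y ω z * YbarObs K N r Y ω z')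
      = (δ * ((r : ℝ) * M / (N : ℝ)) * Q
        + ((r : ℝ) * (r : ℝ) - δ * (r : ℝ)) * M / ((N : ℝ) * ((N : ℝ) - 1))
            * (Sz * Sz' - Q)) / ((r : ℝ) * (r : ℝ)) / M := by
    unfold _root_.expect
    rw [← hM]
    congr 1
    rw [← key]
    calc ∑ ω ∈ Assignments K N r, YbarObs K N r Y ω z * YbarObs K N r Y ω z'
        = ∑ ω ∈ Assignments K N r,
            ((∑ i, Wvar K N ω i z * Y i z) * (∑ j, Wvar K N ω j z' * Y j z'))
              / ((r : ℝ) * (r : ℝ)) := by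
          apply Finset.sum_congr rfl
          intro ω _
          rw [YbarObs_eq_sum Y ω z, YbarObs_eq_sum Y ω z', div_mul_div_comm]
      _ = (∑ ω ∈ Assignments K N r,
            (∑ i, Wvar K N ω i z * Y i z) * (∑ j, Wvar K N ω j z' * Y j z'))
              / ((r : ℝ) * (r : ℝ)) := by
          rw [Finset.sum_div]
  clear_value M Q Sz Sz'
  rw [hexp]
  have hScov : Scov K N Y z z' = (Q - Sz * Sz' / (N : ℝ)) / ((N : ℝ) - 1) := by
    unfold Scov
    rw [centered_sum hN0' Y z z', ← hQ, ← hSz, ← hSz']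
  have hYbar : Ybar K N Y z = Sz / (N : ℝ) := by rw [hSz]; rfl
  have hYbar' : Ybar K N Y z' = Sz' / (N : ℝ) := by rw [hSz']; rfl
  by_cases h : z = z'
  · subst h
    have hSsq : Ssq K N Y z = (Q - Sz * Sz / (N : ℝ)) / ((N : ℝ) - 1) := by
      rw [Ssq_eq hN0' Y z, ← hQ, ← hSz]
    have hSS : Sz' = Sz := by rw [hSz', hSz]
    simp only [hδ, if_pos rfl, ↓reduceIte]
    rw [hScov, hSsq, hYbar, hSS]
    field_simp
    ring
  · simp only [hδ, if_neg h]
    rw [hScov, hYbar, hYbar']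
    field_simp
    ring

end CRD


namespace CRD
variable {K N r : ℕ}

lemma gA_mul_self (A : Finset (Fin K)) (z : Combo K) : gA K A z * gA K A z = 1 := by
  unfold gA
  rw [← Finset.prod_mul_distrib]
  apply Finset.prod_eq_one
  intro k _
  split <;> norm_num

lemma SsqA_eq (hN0 : (N : ℝ) ≠ 0) (Y : Fin N → Combo K → ℝ) (A : Finset (Fin K)) :
    SsqA K N Y A = ∑ z : Combo K, ∑ z' : Combo K,
      gA K A z / (2 : ℝ) ^ (K - 1) * (gA K A z' / (2 : ℝ) ^ (K - 1))
        * Scov K N Y z z' := by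
  have hbar : tauBar K N Y A = (∑ z : Combo K, gA K A z * Ybar K N Y z) / (2 : ℝ) ^ (K - 1) := by
    unfold tauBar tauUnit Ybar
    rw [Finset.sum_congr rfl fun z (_ : z ∈ univ) =>
      (by rw [← Finset.mul_sum, mul_div_assoc] :
        gA K A z * ((∑ i, Y i z) / (N : ℝ)) = (∑ i, gA K A z * Y i z) / (N : ℝ))]
    rw [← Finset.sum_div, Finset.sum_comm, ← Finset.sum_div, div_div, div_div, mul_comm]
  have hdev : ∀ i : Fin N, tauUnit K N Y A i - tauBar K N Y A
      = ∑ z : Combo K, gA K A z / (2 : ℝ) ^ (K - 1) * (Y i z - Ybar K N Y z) := by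
    intro i
    rw [hbar]
    unfold tauUnit
    rw [← sub_div, ← Finset.sum_sub_distrib, Finset.sum_div]
    apply Finset.sum_congr rfl
    intro z _
    ring
  unfold SsqA
  rw [Finset.sum_congr rfl fun i (_ : i ∈ univ) => by
    rw [sq (tauUnit K N Y A i - tauBar K N Y A), hdev i, Finset.sum_mul_sum]]
  rw [Finset.sum_comm, Finset.sum_div]
  apply Finset.sum_congr rfl
  intro z _
  rw [Finset.sum_comm, Finset.sum_div]
  apply Finset.sum_congr rfl
  intro z' _
  unfold Scov
  rw [← mul_div_assoc]
  congr 1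
  rw [Finset.mul_sum]
  exact Finset.sum_congr rfl fun i _ => by ring

end CRD

/-- Theorem 2. Var(τ̂_A) = (1/(2^{2(K−1)} r)) Σ_z S²(z) − (1/N) S_A². -/
theorem tauHat_variance (K N r : ℕ) (hK : 1 ≤ K) (hr : 0 < r) (hN : N = r * 2 ^ K)
    (Y : Fin N → Combo K → ℝ) (A : Finset (Fin K)) (hA : A.Nonempty) :
    variance K N r (tauHat K N r Y A) =
      (1 / ((2 : ℝ) ^ (2 * (K - 1)) * (r : ℝ))) * (∑ z : Combo K, Ssq K N Y z) -
        (1 / (N : ℝ)) * SsqA K N Y A := by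
  classical
  have hne := CRD.assignments_nonempty (K := K) (N := N) (r := r) hN
  have hN2 := CRD.N_ge_two hK hr hN
  have hN0 : 0 < N := lt_of_lt_of_le (by norm_num) hN2
  have hN0' : (N : ℝ) ≠ 0 := Nat.cast_ne_zero.mpr hN0.ne'
  have hr0' : (r : ℝ) ≠ 0 := Nat.cast_ne_zero.mpr hr.ne'
  have hp0 : ((2 : ℝ) ^ (K - 1)) ≠ 0 := by positivity
  set a : Combo K → ℝ := fun z => gA K A z / (2 : ℝ) ^ (K - 1) with ha
  have haa : ∀ z : Combo K, a z * a z = 1 / (2 : ℝ) ^ (2 * (K - 1)) := by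
    intro z
    rw [ha]
    simp only
    rw [div_mul_div_comm, CRD.gA_mul_self A z, ← pow_add, two_mul]
  have htau : ∀ ω : Fin N → Combo K,
      tauHat K N r Y A ω = ∑ z : Combo K, a z * YbarObs K N r Y ω z := by
    intro ω
    unfold tauHat
    rw [Finset.sum_div]
    apply Finset.sum_congr rfl
    intro z _
    rw [mul_div_right_comm]
  have hEt : expect K N r (tauHat K N r Y A) = ∑ z : Combo K, a z * Ybar K N Y z := by
    have h1 : expect K N r (tauHat K N r Y A)
        = expect K N r (fun ω => ∑ z : Combo K, a z * YbarObs K N r Y ω z) := by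
      congr 1
      funext ω
      exact htau ω
    rw [h1, CRD.expect_sum]
    exact Finset.sum_congr rfl fun z _ => by
      rw [CRD.expect_const_mul, CRD.expect_YbarObs hK hr hN]
  have hEt2 : expect K N r (fun ω => tauHat K N r Y A ω * tauHat K N r Y A ω)
      = ∑ z : Combo K, ∑ z' : Combo K, a z * a z'
          * expect K N r (fun ω => YbarObs K N r Y ω z * YbarObs K N r Y ω z') := by
    have h1 : (fun ω => tauHat K N r Y A ω * tauHat K N r Y A ω)
        = fun ω => ∑ z : Combo K, ∑ z' : Combo K,
            a z * a z' * (YbarObs K N r Y ω z * YbarObs K N r Y ω z') := by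
      funext ω
      rw [htau ω, Finset.sum_mul_sum]
      exact Finset.sum_congr rfl fun z _ => Finset.sum_congr rfl fun z' _ => by ring
    rw [h1, CRD.expect_sum]
    apply Finset.sum_congr rfl
    intro z _
    rw [CRD.expect_sum]
    exact Finset.sum_congr rfl fun z' _ => by rw [CRD.expect_const_mul]
  have step : variance K N r (tauHat K N r Y A)
      = ∑ z : Combo K, ∑ z' : Combo K, a z * a z' *
          (expect K N r (fun ω => YbarObs K N r Y ω z * YbarObs K N r Y ω z')
            - Ybar K N Y z * Ybar K N Y z') := by
    unfold variance
    rw [CRD.variance_expand hne, hEt2, hEt, Finset.sum_mul_sum, ← Finset.sum_sub_distrib]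
    apply Finset.sum_congr rfl
    intro z _
    rw [← Finset.sum_sub_distrib]
    apply Finset.sum_congr rfl
    intro z' _
    ring
  rw [step]
  have step2 : ∑ z : Combo K, ∑ z' : Combo K, a z * a z' *
      (expect K N r (fun ω => YbarObs K N r Y ω z * YbarObs K N r Y ω z')
        - Ybar K N Y z * Ybar K N Y z')
      = ∑ z : Combo K, ∑ z' : Combo K, (a z * a z' * (-(1 / (N : ℝ)) * Scov K N Y z z')
          + a z * a z' * (if z = z' then (1 / (r : ℝ)) * Ssq K N Y z else 0)) := by
    apply Finset.sum_congr rfl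
    intro z _
    apply Finset.sum_congr rfl
    intro z' _
    rw [CRD.cov_YbarObs hK hr hN Y z z', mul_add]
  rw [step2]
  have split : ∑ z : Combo K, ∑ z' : Combo K, (a z * a z' * (-(1 / (N : ℝ)) * Scov K N Y z z')
      + a z * a z' * (if z = z' then (1 / (r : ℝ)) * Ssq K N Y z else 0))
      = (∑ z : Combo K, ∑ z' : Combo K, a z * a z' * (-(1 / (N : ℝ)) * Scov K N Y z z'))
        + ∑ z : Combo K, ∑ z' : Combo K,
            a z * a z' * (if z = z' then (1 / (r : ℝ)) * Ssq K N Y z else 0) := by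
    rw [← Finset.sum_add_distrib]
    exact Finset.sum_congr rfl fun z _ => Finset.sum_add_distrib
  rw [split]
  have part1 : ∑ z : Combo K, ∑ z' : Combo K,
      a z * a z' * (-(1 / (N : ℝ)) * Scov K N Y z z')
      = -(1 / (N : ℝ)) * SsqA K N Y A := by
    rw [CRD.SsqA_eq hN0' Y A, Finset.mul_sum]
    apply Finset.sum_congr rfl
    intro z _
    rw [Finset.mul_sum]
    apply Finset.sum_congr rfl
    intro z' _
    rw [ha]
    ring
  have part2 : ∑ z : Combo K, ∑ z' : Combo K,
      a z * a z' * (if z = z' then (1 / (r : ℝ)) * Ssq K N Y z else 0)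
      = (1 / ((2 : ℝ) ^ (2 * (K - 1)) * (r : ℝ))) * ∑ z : Combo K, Ssq K N Y z := by
    have hinner : ∀ z : Combo K, ∑ z' : Combo K,
        a z * a z' * (if z = z' then (1 / (r : ℝ)) * Ssq K N Y z else 0)
        = (1 / ((2 : ℝ) ^ (2 * (K - 1)) * (r : ℝ))) * Ssq K N Y z := by
      intro z
      have h7 : (∑ z' : Combo K, a z * a z' * (if z = z' then (1 / (r : ℝ)) * Ssq K N Y z else 0))
          = ∑ z' : Combo K, if z = z' then a z * a z' * ((1 / (r : ℝ)) * Ssq K N Y z) else 0 := by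
        apply Finset.sum_congr rfl
        intro z' _
        rw [mul_ite, mul_zero]
      rw [h7, Finset.sum_ite_eq univ z
        (fun z' => a z * a z' * ((1 / (r : ℝ)) * Ssq K N Y z)), if_pos (Finset.mem_univ z),
        haa z]
      field_simp
    rw [Finset.sum_congr rfl fun z _ => hinner z, ← Finset.mul_sum]
  rw [part1, part2]
  ring
end
end

section
/- Strict additivity holds if and only if S_A² = 0 for every nonempty subset A ⊆ {1,…,K}; equivalently, strict additivity holds if and only if, for every nonempty A, the unit-level factorial effects τ_{iA} are the same for all units i. -/
open Finset

noncomputable section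

lemma gA_orth (K : ℕ) (z w : Combo K) :
    ∑ A : Finset (Fin K), gA K A z * gA K A w = if z = w then (2:ℝ)^K else 0 := by
  have h1 : ∑ A : Finset (Fin K), gA K A z * gA K A w
      = ∑ A ∈ (univ : Finset (Fin K)).powerset,
          (∏ k ∈ A, ((if z k then (1:ℝ) else -1) * (if w k then (1:ℝ) else -1))) * ∏ k ∈ univ \ A, (1:ℝ) := by
    rw [Finset.powerset_univ]
    refine Finset.sum_congr rfl fun A _ => ?_
    rw [gA, gA, ← Finset.prod_mul_distrib, Finset.prod_const_one, mul_one]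
  rw [h1, ← Finset.prod_add]
  by_cases h : z = w
  · subst h
    simp only [if_pos rfl]
    rw [Finset.prod_congr rfl (fun k _ => ?_), Finset.prod_const, Finset.card_univ, Fintype.card_fin]
    · rfl
    · cases z k <;> norm_num
  · rw [if_neg h]
    obtain ⟨k, hk⟩ : ∃ k, z k ≠ w k := by
      by_contra hc; push_neg at hc; exact h (funext hc)
    refine Finset.prod_eq_zero (Finset.mem_univ k) ?_
    rcases Bool.eq_false_or_eq_true (z k) with h1 | h1 <;>
      rcases Bool.eq_false_or_eq_true (w k) with h2 | h2 <;>
      simp_all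

lemma sum_gA (K : ℕ) (A : Finset (Fin K)) (hA : A.Nonempty) :
    ∑ z : Combo K, gA K A z = 0 := by
  obtain ⟨k, hk⟩ := hA
  have hinv : Function.Involutive (fun z : Combo K => Function.update z k (! z k)) := by
    intro z
    simp [Function.update_idem]
  have hsum : ∑ z : Combo K, gA K A z
      = ∑ z : Combo K, gA K A (Function.update z k (! z k)) :=
    (Fintype.sum_equiv hinv.toPerm _ _ (fun z => rfl)).symm
  have hneg : ∀ z : Combo K, gA K A (Function.update z k (! z k)) = - gA K A z := by
    intro z
    rw [gA, gA, ← Finset.mul_prod_erase A _ hk, ← Finset.mul_prod_erase A _ hk]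
    have : ∏ j ∈ A.erase k, (if Function.update z k (! z k) j then (1:ℝ) else -1)
        = ∏ j ∈ A.erase k, (if z j then (1:ℝ) else -1) := by
      refine Finset.prod_congr rfl fun j hj => ?_
      rw [Function.update_of_ne (Finset.ne_of_mem_erase hj)]
    rw [this, Function.update_self]
    cases z k <;> simp
  have : (∑ z : Combo K, gA K A z) = - ∑ z : Combo K, gA K A z := by
    conv_lhs => rw [hsum]
    rw [Finset.sum_congr rfl fun z _ => hneg z, Finset.sum_neg_distrib]
  linarith

lemma const_of_contrasts (K : ℕ) (d : Combo K → ℝ)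
    (h : ∀ A : Finset (Fin K), A.Nonempty → ∑ z, gA K A z * d z = 0) :
    ∀ z zs : Combo K, d z = d zs := by
  have key : ∀ z : Combo K, (2:ℝ)^K * d z = ∑ w : Combo K, d w := by
    intro z
    have h1 : ∑ A : Finset (Fin K), gA K A z * ∑ w, gA K A w * d w
        = ∑ w : Combo K, (∑ A : Finset (Fin K), gA K A z * gA K A w) * d w := by
      calc ∑ A : Finset (Fin K), gA K A z * ∑ w, gA K A w * d w
          = ∑ A : Finset (Fin K), ∑ w, gA K A z * gA K A w * d w := by
            simp [Finset.mul_sum, mul_assoc]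
        _ = ∑ w : Combo K, ∑ A : Finset (Fin K), gA K A z * gA K A w * d w := Finset.sum_comm
        _ = _ := by simp [Finset.sum_mul]
    have h2 : ∑ A : Finset (Fin K), gA K A z * ∑ w, gA K A w * d w = ∑ w : Combo K, d w := by
      rw [Finset.sum_eq_single (∅ : Finset (Fin K))]
      · simp [gA]
      · intro A _ hA
        rw [h A (Finset.nonempty_iff_ne_empty.2 hA), mul_zero]
      · simp
    have h3 : ∑ w : Combo K, (∑ A : Finset (Fin K), gA K A z * gA K A w) * d w = (2:ℝ)^K * d z := by
      have : ∀ w : Combo K, (∑ A : Finset (Fin K), gA K A z * gA K A w) * d w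
          = if z = w then (2:ℝ)^K * d w else 0 := by
        intro w; rw [gA_orth]; split <;> simp
      rw [Finset.sum_congr rfl fun w _ => this w, Finset.sum_ite_eq]
      simp
    rw [← h3, ← h1, h2]
  intro z zs
  have h1 := key z; have h2 := key zs
  have h2K : (2:ℝ)^K ≠ 0 := by positivity
  field_simp at h1 h2
  nlinarith [h1, h2, pow_pos (by norm_num : (0:ℝ) < 2) K]

lemma tau_eq_iff (K N : ℕ) (Y : Fin N → Combo K → ℝ) (A : Finset (Fin K)) (i i' : Fin N) :
    tauUnit K N Y A i = tauUnit K N Y A i' ↔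
      ∑ z : Combo K, gA K A z * (Y i z - Y i' z) = 0 := by
  have h2K : ((2:ℝ)^(K-1)) ≠ 0 := by positivity
  have hs : (∑ z : Combo K, gA K A z * (Y i z - Y i' z))
      = (∑ z : Combo K, gA K A z * Y i z) - ∑ z : Combo K, gA K A z * Y i' z := by
    rw [← Finset.sum_sub_distrib]
    exact Finset.sum_congr rfl fun z _ => by ring
  rw [hs, sub_eq_zero, tauUnit, tauUnit]
  exact ⟨fun h => by field_simp at h; exact h, fun h => by rw [h]⟩

/-- Strict additivity holds iff S_A² = 0 for every nonempty A;
equivalently, iff for every nonempty A the unit-level effects τ_{iA} are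
constant across units. -/
theorem strict_additivity_iff (K N r : ℕ) (hK : 1 ≤ K) (hr : 0 < r) (hN : N = r * 2 ^ K)
    (hN2 : 2 ≤ N) (Y : Fin N → Combo K → ℝ) :
    (StrictAdditivity K N Y ↔
      ∀ A : Finset (Fin K), A.Nonempty → SsqA K N Y A = 0) ∧
    (StrictAdditivity K N Y ↔
      ∀ A : Finset (Fin K), A.Nonempty →
        ∀ i i' : Fin N, tauUnit K N Y A i = tauUnit K N Y A i') := by
  have hTau : StrictAdditivity K N Y ↔
      (∀ A : Finset (Fin K), A.Nonempty →
        ∀ i i' : Fin N, tauUnit K N Y A i = tauUnit K N Y A i') := by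
    constructor
    · intro hSA A hA i i'
      rw [tau_eq_iff]
      have hc : ∀ z : Combo K, Y i z - Y i' z
          = Y i (fun _ => true) - Y i' (fun _ => true) := by
        intro z
        have := hSA z (fun _ => true) i i'
        linarith
      calc ∑ z : Combo K, gA K A z * (Y i z - Y i' z)
          = ∑ z : Combo K, gA K A z * (Y i (fun _ => true) - Y i' (fun _ => true)) :=
            Finset.sum_congr rfl fun z _ => by rw [hc z]
        _ = (∑ z : Combo K, gA K A z) * (Y i (fun _ => true) - Y i' (fun _ => true)) :=
            (Finset.sum_mul _ _ _).symm
        _ = 0 := by rw [sum_gA K A hA, zero_mul]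
    · intro h z zs i i'
      have hd := const_of_contrasts K (fun w => Y i w - Y i' w)
        (fun A hA => (tau_eq_iff K N Y A i i').1 (h A hA i i')) z zs
      linarith
  have hNpos : (0:ℝ) < (N:ℝ) - 1 := by
    have : (2:ℝ) ≤ (N:ℝ) := by exact_mod_cast hN2
    linarith
  have hNne : (N:ℝ) ≠ 0 := by positivity
  have hSsq : ∀ A : Finset (Fin K),
      (SsqA K N Y A = 0 ↔ ∀ i i' : Fin N, tauUnit K N Y A i = tauUnit K N Y A i') := by
    intro A
    have h1 : SsqA K N Y A = 0 ↔
        ∀ i : Fin N, tauUnit K N Y A i = tauBar K N Y A := by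
      rw [SsqA, div_eq_zero_iff]
      constructor
      · rintro (h | h)
        · intro i
          have := (Finset.sum_eq_zero_iff_of_nonneg
            (fun j _ => sq_nonneg (tauUnit K N Y A j - tauBar K N Y A))).1 h i (Finset.mem_univ i)
          have := pow_eq_zero_iff (two_ne_zero) |>.1 this
          linarith
        · linarith
      · intro h
        left
        refine Finset.sum_eq_zero fun i _ => ?_
        rw [h i, sub_self]
        ring
    rw [h1]
    constructor
    · intro h i i'
      rw [h i, h i']
    · intro h i
      have hbar : tauBar K N Y A = tauUnit K N Y A i := by
        rw [tauBar, Finset.sum_congr rfl (fun j _ => h j i), Finset.sum_const,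
          Finset.card_univ, Fintype.card_fin, nsmul_eq_mul]
        field_simp
      rw [hbar]
  exact ⟨hTau.trans (forall₂_congr fun A _ => (hSsq A).symm), hTau⟩
end
end

section
/- Under strict additivity, the population variances S²(z) take a common value S² for all treatment combinations z, and for every nonempty subset A ⊆ {1,…,K} the sampling variance of the estimated factorial effect under a completely randomized assignment is Var(τ̂_A) = (4/N) S². -/
open Finset

noncomputable section

section Aux

variable {K N r : ℕ}

lemma mem_assignments {ω : Fin N → Combo K} :
    ω ∈ Assignments K N r ↔ ∀ z : Combo K,
      (Finset.univ.filter (fun i => ω i = z)).card = r := by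
  simp [Assignments]

lemma comp_mem_assignments (σ : Equiv.Perm (Combo K)) {ω : Fin N → Combo K}
    (hω : ω ∈ Assignments K N r) : (σ ∘ ω) ∈ Assignments K N r := by
  rw [mem_assignments] at hω ⊢
  intro z
  have : (Finset.univ.filter (fun i => (σ ∘ ω) i = z)) =
      (Finset.univ.filter (fun i => ω i = σ.symm z)) := by
    apply Finset.filter_congr
    intro i _
    simp [Function.comp, Equiv.eq_symm_apply]
  rw [this]; exact hω _

lemma perm_mem_assignments (π : Equiv.Perm (Fin N)) {ω : Fin N → Combo K}
    (hω : ω ∈ Assignments K N r) : (ω ∘ π) ∈ Assignments K N r := by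
  rw [mem_assignments] at hω ⊢
  intro z
  rw [← hω z]
  apply Finset.card_nbij (fun i => π i)
  · intro a ha; simp_all
  · exact fun a _ b _ h => π.injective h
  · intro a ha
    refine ⟨π.symm a, by simp_all, by simp⟩

lemma sum_comp_perm (σ : Equiv.Perm (Combo K)) (F : (Fin N → Combo K) → ℝ) :
    ∑ ω ∈ Assignments K N r, F (σ ∘ ω) = ∑ ω ∈ Assignments K N r, F ω := by
  apply Finset.sum_nbij' (fun ω => σ ∘ ω) (fun ω => σ.symm ∘ ω)
  · exact fun ω hω => comp_mem_assignments σ hω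
  · exact fun ω hω => comp_mem_assignments σ.symm hω
  · intro ω _; ext i; simp
  · intro ω _; ext i; simp
  · intro ω _; rfl

lemma sum_perm_units (π : Equiv.Perm (Fin N)) (F : (Fin N → Combo K) → ℝ) :
    ∑ ω ∈ Assignments K N r, F (ω ∘ π) = ∑ ω ∈ Assignments K N r, F ω := by
  apply Finset.sum_nbij' (fun ω => ω ∘ π) (fun ω => ω ∘ π.symm)
  · exact fun ω hω => perm_mem_assignments π hω
  · exact fun ω hω => perm_mem_assignments π.symm hω
  · intro ω _; ext i; simp
  · intro ω _; ext i; simp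
  · intro ω _; rfl

lemma assignments_nonempty (hr : 0 < r) (hN : N = r * 2 ^ K) :
    (Assignments K N r).Nonempty := by
  have hcc : Fintype.card (Combo K) = 2 ^ K := by
    simp
  have hc : Fintype.card (Fin N) = Fintype.card (Combo K × Fin r) := by
    rw [Fintype.card_fin, Fintype.card_prod, Fintype.card_fin, hcc, hN, mul_comm]
  let e : Fin N ≃ Combo K × Fin r := Fintype.equivOfCardEq hc
  refine ⟨fun i => (e i).1, ?_⟩
  rw [mem_assignments]
  intro z
  have : (Finset.univ.filter (fun i => (e i).1 = z)).card =
      (Finset.univ : Finset (Fin r)).card := by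
    apply Finset.card_nbij' (fun i => (e i).2) (fun b => e.symm (z, b))
    · intro a _; exact Finset.mem_univ _
    · intro b _
      simp only [Finset.mem_coe, Finset.mem_filter, Finset.mem_univ, true_and]
      rw [Equiv.apply_symm_apply]
    · intro a ha
      simp only [Finset.mem_coe, Finset.mem_filter] at ha
      have h2 : (z, (e a).2) = e a := by rw [← ha.2]
      show e.symm (z, (e a).2) = a
      rw [h2, Equiv.symm_apply_apply]
    · intro b _
      show (e (e.symm (z, b))).2 = b
      rw [Equiv.apply_symm_apply]
  simpa using this

end Aux

section Counting

variable {K N r : ℕ}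

/-- First moment count: Σ_ω W_i(z). -/
def C1 (K N r : ℕ) (i : Fin N) (z : Combo K) : ℝ :=
  ∑ ω ∈ Assignments K N r, Wvar K N ω i z

/-- Second moment count: Σ_ω W_i(z) W_j(z*). -/
def C2 (K N r : ℕ) (i j : Fin N) (z zs : Combo K) : ℝ :=
  ∑ ω ∈ Assignments K N r, Wvar K N ω i z * Wvar K N ω j zs

lemma C1_combo (i : Fin N) (z z' : Combo K) : C1 K N r i z = C1 K N r i z' := by
  unfold C1
  rw [← sum_comp_perm (Equiv.swap z z') (fun ω => Wvar K N ω i z)]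
  apply Finset.sum_congr rfl
  intro ω _
  simp only [Wvar, Function.comp]
  congr 1
  rw [eq_iff_iff]
  constructor
  · intro h
    have := congrArg (Equiv.swap z z') h
    rwa [Equiv.swap_apply_left, Equiv.swap_apply_self] at this
  · intro h
    rw [h, Equiv.swap_apply_right]

lemma C1_unit (i i' : Fin N) (z : Combo K) : C1 K N r i z = C1 K N r i' z := by
  unfold C1
  rw [← sum_perm_units (Equiv.swap i i') (fun ω => Wvar K N ω i z)]
  apply Finset.sum_congr rfl
  intro ω _
  simp [Wvar, Function.comp, Equiv.swap_apply_left]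

lemma C1_total (i : Fin N) : ∑ z : Combo K, C1 K N r i z = ((Assignments K N r).card : ℝ) := by
  unfold C1
  rw [Finset.sum_comm]
  have h1 : ∀ ω : Fin N → Combo K, ∑ z : Combo K, Wvar K N ω i z = 1 := by
    intro ω; simp [Wvar, Finset.sum_ite_eq]
  calc ∑ ω ∈ Assignments K N r, ∑ z : Combo K, Wvar K N ω i z
      = ∑ _ω ∈ Assignments K N r, (1 : ℝ) := Finset.sum_congr rfl fun ω _ => h1 ω
    _ = _ := by simp

lemma C1_val (i : Fin N) (z : Combo K) :
    (2 : ℝ) ^ K * C1 K N r i z = ((Assignments K N r).card : ℝ) := by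
  have h := C1_total (K := K) (N := N) (r := r) i
  rw [Finset.sum_congr rfl (fun z' _ => C1_combo i z' z)] at h
  rw [Finset.sum_const] at h
  have hc : (Finset.univ : Finset (Combo K)).card = 2 ^ K := by simp
  rw [hc] at h
  push_cast at h
  rw [← h]
  ring

lemma C2_diag_combo (i j : Fin N) (z y : Combo K) :
    C2 K N r i j z z = C2 K N r i j y y := by
  unfold C2
  rw [← sum_comp_perm (Equiv.swap z y) (fun ω => Wvar K N ω i z * Wvar K N ω j z)]
  apply Finset.sum_congr rfl
  intro ω _
  have key : ∀ x : Combo K, (Equiv.swap z y x = z) = (x = y) := by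
    intro x
    rw [eq_iff_iff]
    constructor
    · intro h
      have := congrArg (Equiv.swap z y) h
      rwa [Equiv.swap_apply_left, Equiv.swap_apply_self] at this
    · intro h; rw [h, Equiv.swap_apply_right]
  simp only [Wvar, Function.comp, key]

lemma C2_offdiag_combo (i j : Fin N) {z z' y y' : Combo K}
    (hz : z ≠ z') (hy : y ≠ y') :
    C2 K N r i j z z' = C2 K N r i j y y' := by
  unfold C2
  set w : Combo K := Equiv.swap z y z' with hw
  have hyw : y ≠ w := by
    intro h
    apply hz
    apply (Equiv.swap z y).injective
    rw [Equiv.swap_apply_left, ← hw]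
    exact h
  set σ : Equiv.Perm (Combo K) := (Equiv.swap z y).trans (Equiv.swap w y') with hσ
  have hσz : σ z = y := by
    simp only [hσ, Equiv.trans_apply, Equiv.swap_apply_left]
    exact Equiv.swap_apply_of_ne_of_ne hyw hy
  have hσz' : σ z' = y' := by
    simp only [hσ, Equiv.trans_apply, ← hw, Equiv.swap_apply_left]
  rw [← sum_comp_perm σ.symm (fun ω => Wvar K N ω i z * Wvar K N ω j z')]
  apply Finset.sum_congr rfl
  intro ω _
  simp only [Wvar, Function.comp]
  congr 1
  · congr 1
    rw [eq_iff_iff]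
    constructor
    · intro h
      have := congrArg σ h
      rwa [Equiv.apply_symm_apply, hσz] at this
    · intro h
      rw [h, ← hσz, Equiv.symm_apply_apply]
  · congr 1
    rw [eq_iff_iff]
    constructor
    · intro h
      have := congrArg σ h
      rwa [Equiv.apply_symm_apply, hσz'] at this
    · intro h
      rw [h, ← hσz', Equiv.symm_apply_apply]

lemma C2_unit (i : Fin N) {j j' : Fin N} (hj : j ≠ i) (hj' : j' ≠ i) (z y : Combo K) :
    C2 K N r i j z y = C2 K N r i j' z y := by
  unfold C2
  rw [← sum_perm_units (Equiv.swap j j') (fun ω => Wvar K N ω i z * Wvar K N ω j y)]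
  apply Finset.sum_congr rfl
  intro ω _
  simp only [Wvar, Function.comp]
  have h1 : Equiv.swap j j' i = i := Equiv.swap_apply_of_ne_of_ne (Ne.symm hj) (Ne.symm hj')
  have h2 : Equiv.swap j j' j = j' := Equiv.swap_apply_left j j'
  simp only [h1, h2]

lemma C2_row (i j : Fin N) (z : Combo K) :
    ∑ zs : Combo K, C2 K N r i j z zs = C1 K N r i z := by
  unfold C2 C1
  rw [Finset.sum_comm]
  apply Finset.sum_congr rfl
  intro ω _
  rw [← Finset.mul_sum]
  have : ∑ zs : Combo K, Wvar K N ω j zs = 1 := by simp [Wvar, Finset.sum_ite_eq]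
  rw [this, mul_one]

lemma C2_col_diag (i : Fin N) (z : Combo K) :
    ∑ j ∈ Finset.univ.erase i, C2 K N r i j z z = ((r : ℝ) - 1) * C1 K N r i z := by
  unfold C2 C1
  rw [Finset.sum_comm]
  rw [Finset.mul_sum]
  apply Finset.sum_congr rfl
  intro ω hω
  rw [← Finset.mul_sum]
  have hcard : ∑ j : Fin N, Wvar K N ω j z = (r : ℝ) := by
    rw [mem_assignments] at hω
    have := hω z
    rw [← this]
    simp [Wvar]
  have herase : ∑ j ∈ Finset.univ.erase i, Wvar K N ω j z = (r : ℝ) - Wvar K N ω i z := by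
    have := Finset.add_sum_erase Finset.univ (fun j => Wvar K N ω j z) (Finset.mem_univ i)
    rw [hcard] at this
    linarith
  rw [herase]
  simp only [Wvar]
  by_cases h : ω i = z <;> simp [h] <;> ring

lemma C2_diag_val {i j : Fin N} (hij : j ≠ i) (z : Combo K) :
    ((N : ℝ) - 1) * C2 K N r i j z z = ((r : ℝ) - 1) * C1 K N r i z := by
  have hcol := C2_col_diag (K := K) (N := N) (r := r) i z
  have hconst : ∀ j' ∈ Finset.univ.erase i, C2 K N r i j' z z = C2 K N r i j z z := by
    intro j' hj'
    exact C2_unit i (Finset.ne_of_mem_erase hj') hij z z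
  rw [Finset.sum_congr rfl hconst, Finset.sum_const] at hcol
  rw [Finset.card_erase_of_mem (Finset.mem_univ i), Finset.card_univ, Fintype.card_fin] at hcol
  rw [← hcol, nsmul_eq_mul]
  have hN1 : (1:ℕ) ≤ N := Nat.one_le_iff_ne_zero.mpr (by
    intro h; subst h; exact absurd (Subsingleton.elim j i) hij)
  push_cast [hN1]
  ring

lemma C2_offdiag_val (hK : 1 ≤ K) (hr : 0 < r) (hN : N = r * 2 ^ K)
    {i j : Fin N} (hij : j ≠ i) {z zs : Combo K} (hzz : z ≠ zs) :
    ((N : ℝ) - 1) * C2 K N r i j z zs = (r : ℝ) * C1 K N r i z := by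
  have hrow := C2_row (K := K) (N := N) (r := r) i j z
  have hsplit := Finset.add_sum_erase Finset.univ (fun zs => C2 K N r i j z zs)
    (Finset.mem_univ z)
  have hconst : ∀ y ∈ Finset.univ.erase z, C2 K N r i j z y = C2 K N r i j z zs := by
    intro y hy
    exact C2_offdiag_combo i j (Ne.symm (Finset.ne_of_mem_erase hy)) hzz
  rw [Finset.sum_congr rfl hconst, Finset.sum_const] at hsplit
  rw [Finset.card_erase_of_mem (Finset.mem_univ z)] at hsplit
  have hcard : (Finset.univ : Finset (Combo K)).card = 2 ^ K := by simp
  rw [hcard, nsmul_eq_mul] at hsplit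
  rw [hrow] at hsplit
  -- hsplit : C2 i j z z + (2^K - 1) * C2 i j z zs = C1 i z
  have hdiag := C2_diag_val (K := K) (N := N) (r := r) hij z
  have h2K : (1:ℕ) ≤ 2 ^ K := Nat.one_le_two_pow
  have hcast : ((2 ^ K - 1 : ℕ) : ℝ) = 2 ^ K - 1 := by push_cast [h2K]; ring
  rw [hcast] at hsplit
  -- multiply hsplit by (N-1):
  have key : ((N:ℝ) - 1) * C2 K N r i j z z +
      ((2:ℝ) ^ K - 1) * (((N:ℝ) - 1) * C2 K N r i j z zs) = ((N:ℝ) - 1) * C1 K N r i z := by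
    rw [← hsplit]; ring
  rw [hdiag] at key
  have hNval : (N : ℝ) = (r : ℝ) * 2 ^ K := by rw [hN]; push_cast; ring
  have h2K1 : (2:ℝ) ^ K - 1 ≠ 0 := by
    have : (2:ℝ) ^ K ≥ 2 ^ 1 := by
      apply pow_le_pow_right₀ (by norm_num) hK
    simp at this; nlinarith
  -- key : (r-1) C1 + (2^K -1)(N-1) C2' = (N-1) C1
  -- so (2^K-1)(N-1) C2' = (N - r) C1 = r(2^K -1) C1
  have : ((2:ℝ) ^ K - 1) * (((N:ℝ) - 1) * C2 K N r i j z zs) =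
      ((2:ℝ) ^ K - 1) * ((r:ℝ) * C1 K N r i z) := by
    rw [hNval] at key ⊢
    nlinarith [key]
  exact mul_left_cancel₀ h2K1 this

end Counting

section GLayer

variable {K N r : ℕ}

lemma gA_flip (A : Finset (Fin K)) {a : Fin K} (ha : a ∈ A) (z : Combo K) :
    gA K A (Function.update z a (!z a)) = - gA K A z := by
  unfold gA
  rw [← Finset.mul_prod_erase A _ ha,
    ← Finset.mul_prod_erase A (fun k => if z k then (1:ℝ) else -1) ha]
  have hrest : ∏ k ∈ A.erase a, (if Function.update z a (!z a) k then (1:ℝ) else -1)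
      = ∏ k ∈ A.erase a, (if z k then (1:ℝ) else -1) := by
    apply Finset.prod_congr rfl
    intro k hk
    rw [Function.update_of_ne (Finset.ne_of_mem_erase hk)]
  rw [hrest, Function.update_self]
  cases h : z a <;> simp

lemma gA_mul_self (A : Finset (Fin K)) (z : Combo K) : gA K A z * gA K A z = 1 := by
  unfold gA
  rw [← Finset.prod_mul_distrib]
  apply Finset.prod_eq_one
  intro k _
  by_cases h : z k <;> simp [h]

lemma sumg_eq_zero {A : Finset (Fin K)} (hA : A.Nonempty) :
    ∑ z : Combo K, gA K A z = 0 := by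
  obtain ⟨a, ha⟩ := hA
  refine Finset.sum_involution (fun z _ => Function.update z a (!z a)) ?_ ?_
    (fun z _ => Finset.mem_univ _) ?_
  · intro z _
    rw [gA_flip A ha z]; ring
  · intro z _ _ h
    have := congrFun h a
    simp only [Function.update_self] at this
    cases hz : z a <;> rw [hz] at this <;> simp at this
  · intro z _
    ext k
    by_cases hk : k = a
    · subst hk
      simp [Function.update_self]
    · simp [Function.update_of_ne hk]

lemma gA_eq_sum (A : Finset (Fin K)) (ω : Fin N → Combo K) (i : Fin N) :
    gA K A (ω i) = ∑ z : Combo K, gA K A z * Wvar K N ω i z := by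
  simp [Wvar, mul_ite, Finset.sum_ite_eq, Finset.sum_ite_eq']

lemma sum_gA_omega {A : Finset (Fin K)} (hA : A.Nonempty) (i : Fin N) :
    ∑ ω ∈ Assignments K N r, gA K A (ω i) = 0 := by
  calc ∑ ω ∈ Assignments K N r, gA K A (ω i)
      = ∑ ω ∈ Assignments K N r, ∑ z : Combo K, gA K A z * Wvar K N ω i z :=
        Finset.sum_congr rfl fun ω _ => gA_eq_sum A ω i
    _ = ∑ z : Combo K, gA K A z * C1 K N r i z := by
        rw [Finset.sum_comm]
        apply Finset.sum_congr rfl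
        intro z _
        unfold C1
        rw [Finset.mul_sum]
    _ = ∑ z : Combo K, gA K A z * C1 K N r i (fun _ => false) := by
        apply Finset.sum_congr rfl
        intro z _
        rw [C1_combo i z (fun _ => false)]
    _ = (∑ z : Combo K, gA K A z) * C1 K N r i (fun _ => false) := by
        rw [Finset.sum_mul]
    _ = 0 := by rw [sumg_eq_zero hA, zero_mul]

lemma sum_gA_pair (hK : 1 ≤ K) (hr : 0 < r) (hN : N = r * 2 ^ K) {A : Finset (Fin K)}
    (hA : A.Nonempty) {i j : Fin N} (hij : j ≠ i) :
    ((N:ℝ) - 1) * ∑ ω ∈ Assignments K N r, gA K A (ω i) * gA K A (ω j)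
      = -((Assignments K N r).card : ℝ) := by
  have hc : ∀ z : Combo K, C1 K N r i z = C1 K N r i (fun _ => false) :=
    fun z => C1_combo i z (fun _ => false)
  set c : ℝ := C1 K N r i (fun _ => false) with hcdef
  have hg2 : ∀ z : Combo K, gA K A z * gA K A z = 1 := gA_mul_self A
  have expand : ∑ ω ∈ Assignments K N r, gA K A (ω i) * gA K A (ω j)
      = ∑ z : Combo K, ∑ zs : Combo K, gA K A z * gA K A zs * C2 K N r i j z zs := by
    calc ∑ ω ∈ Assignments K N r, gA K A (ω i) * gA K A (ω j)
        = ∑ ω ∈ Assignments K N r, ∑ z : Combo K, ∑ zs : Combo K,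
            (gA K A z * Wvar K N ω i z) * (gA K A zs * Wvar K N ω j zs) := by
          apply Finset.sum_congr rfl
          intro ω _
          rw [gA_eq_sum A ω i, gA_eq_sum A ω j, Finset.sum_mul_sum]
      _ = _ := by
          rw [Finset.sum_comm]
          apply Finset.sum_congr rfl
          intro z _
          rw [Finset.sum_comm]
          apply Finset.sum_congr rfl
          intro zs _
          unfold C2
          rw [Finset.mul_sum]
          apply Finset.sum_congr rfl
          intro ω _
          ring
  have inner : ∀ z : Combo K,
      ((N:ℝ)-1) * ∑ zs : Combo K, gA K A z * gA K A zs * C2 K N r i j z zs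
      = -(gA K A z * gA K A z * c) := by
    intro z
    have hdiag : ((N:ℝ)-1) * C2 K N r i j z z = ((r:ℝ)-1) * c := by
      rw [C2_diag_val hij z, hc z]
    have hoff : ∀ zs ∈ Finset.univ.erase z, ((N:ℝ)-1) * C2 K N r i j z zs = (r:ℝ) * c := by
      intro zs hzs
      rw [C2_offdiag_val hK hr hN hij (Ne.symm (Finset.ne_of_mem_erase hzs)), hc z]
    have herase : ∑ zs ∈ Finset.univ.erase z, gA K A zs = - gA K A z := by
      have h0 := Finset.add_sum_erase Finset.univ (gA K A) (Finset.mem_univ z)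
      rw [sumg_eq_zero hA] at h0
      linarith
    calc ((N:ℝ)-1) * ∑ zs : Combo K, gA K A z * gA K A zs * C2 K N r i j z zs
        = ∑ zs : Combo K, gA K A z * gA K A zs * (((N:ℝ)-1) * C2 K N r i j z zs) := by
          rw [Finset.mul_sum]
          apply Finset.sum_congr rfl
          intro zs _
          ring
      _ = gA K A z * gA K A z * (((N:ℝ)-1) * C2 K N r i j z z)
            + ∑ zs ∈ Finset.univ.erase z,
                gA K A z * gA K A zs * (((N:ℝ)-1) * C2 K N r i j z zs) :=
          (Finset.add_sum_erase _ _ (Finset.mem_univ z)).symm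
      _ = gA K A z * gA K A z * (((r:ℝ)-1) * c)
            + ∑ zs ∈ Finset.univ.erase z, gA K A z * gA K A zs * ((r:ℝ) * c) := by
          rw [hdiag]
          congr 1
          apply Finset.sum_congr rfl
          intro zs hzs
          rw [hoff zs hzs]
      _ = gA K A z * gA K A z * (((r:ℝ)-1) * c)
            + gA K A z * ((r:ℝ) * c) * ∑ zs ∈ Finset.univ.erase z, gA K A zs := by
          rw [Finset.mul_sum]
          congr 1
          apply Finset.sum_congr rfl
          intro zs _
          ring
      _ = -(gA K A z * gA K A z * c) := by
          rw [herase]; ring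
  rw [expand, Finset.mul_sum]
  have step : ∑ z : Combo K,
      ((N:ℝ)-1) * ∑ zs : Combo K, gA K A z * gA K A zs * C2 K N r i j z zs
      = ∑ z : Combo K, -(gA K A z * gA K A z * c) :=
    Finset.sum_congr rfl fun z _ => inner z
  rw [step]
  have step2 : ∑ z : Combo K, -(gA K A z * gA K A z * c) = -((2:ℝ)^K * c) := by
    have : ∀ z : Combo K, -(gA K A z * gA K A z * c) = -c := by
      intro z; rw [hg2 z]; ring
    rw [Finset.sum_congr rfl fun z _ => this z, Finset.sum_const]
    have hcard : (Finset.univ : Finset (Combo K)).card = 2 ^ K := by simp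
    rw [hcard, nsmul_eq_mul]
    push_cast
    ring
  rw [step2, hcdef, C1_val i (fun _ => false)]

end GLayer

section ExpLayer

variable {K N r : ℕ}

lemma expect_congr {f g : (Fin N → Combo K) → ℝ}
    (h : ∀ ω ∈ Assignments K N r, f ω = g ω) : expect K N r f = expect K N r g := by
  unfold _root_.expect
  rw [Finset.sum_congr rfl h]

lemma variance_congr {f g : (Fin N → Combo K) → ℝ}
    (h : ∀ ω ∈ Assignments K N r, f ω = g ω) : variance K N r f = variance K N r g := by
  unfold variance
  rw [expect_congr h]
  exact expect_congr fun ω hω => by rw [h ω hω]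

lemma expect_affine (hM : ((Assignments K N r).card : ℝ) ≠ 0) (c a : ℝ)
    (T : (Fin N → Combo K) → ℝ) :
    expect K N r (fun ω => c + a * T ω) = c + a * expect K N r T := by
  unfold _root_.expect
  rw [Finset.sum_add_distrib, Finset.sum_const, ← Finset.mul_sum, nsmul_eq_mul]
  field_simp

lemma expect_smul (a : ℝ) (T : (Fin N → Combo K) → ℝ) :
    expect K N r (fun ω => a * T ω) = a * expect K N r T := by
  unfold _root_.expect
  rw [← Finset.mul_sum, mul_div_assoc]

lemma variance_affine (hM : ((Assignments K N r).card : ℝ) ≠ 0) (c a : ℝ)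
    (T : (Fin N → Combo K) → ℝ) :
    variance K N r (fun ω => c + a * T ω) = a ^ 2 * variance K N r T := by
  unfold variance
  rw [expect_affine hM]
  have h1 : ∀ ω ∈ Assignments K N r,
      (c + a * T ω - (c + a * expect K N r T)) ^ 2
        = a ^ 2 * (T ω - expect K N r T) ^ 2 := fun ω _ => by ring
  rw [expect_congr h1, expect_smul]

end ExpLayer

/-- Corollary 1. Under strict additivity the S²(z) share a common
value S², and Var(τ̂_A) = (4/N) S² for every nonempty A. -/
theorem tauHat_variance_additive (K N r : ℕ) (hK : 1 ≤ K) (hr : 0 < r)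
    (hN : N = r * 2 ^ K) (Y : Fin N → Combo K → ℝ)
    (hadd : StrictAdditivity K N Y) :
    ∃ S2 : ℝ, (∀ z : Combo K, Ssq K N Y z = S2) ∧
      ∀ A : Finset (Fin K), A.Nonempty →
        variance K N r (tauHat K N r Y A) = (4 / (N : ℝ)) * S2 := by
  have hN0 : 0 < N := by rw [hN]; positivity
  have hN2 : 2 ≤ N := by
    rw [hN]
    calc 2 = 1 * 2 ^ 1 := by norm_num
      _ ≤ r * 2 ^ K := Nat.mul_le_mul hr (Nat.pow_le_pow_right (by norm_num) hK)
  have hNne : (N:ℝ) ≠ 0 := Nat.cast_ne_zero.mpr hN0.ne'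
  have hN1 : (N:ℝ) - 1 ≠ 0 := by
    have : (2:ℝ) ≤ (N:ℝ) := by exact_mod_cast hN2
    linarith
  have hrne : (r:ℝ) ≠ 0 := Nat.cast_ne_zero.mpr hr.ne'
  have hpowne : (2:ℝ) ^ (K-1) ≠ 0 := by positivity
  set i0 : Fin N := ⟨0, hN0⟩ with hi0
  set z0 : Combo K := fun _ => false with hz0
  set f : Fin N → ℝ := fun i => Y i z0 with hf
  set cz : Combo K → ℝ := fun z => Y i0 z - Y i0 z0 with hcz
  have hY : ∀ (i : Fin N) (z : Combo K), Y i z = f i + cz z := by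
    intro i z
    have h := hadd z z0 i i0
    simp only [hf, hcz]
    linarith
  have hsum : ∀ z : Combo K, ∑ j, Y j z = (∑ j, f j) + (N:ℝ) * cz z := by
    intro z
    rw [Finset.sum_congr rfl fun j _ => hY j z, Finset.sum_add_distrib, Finset.sum_const,
      Finset.card_univ, Fintype.card_fin, nsmul_eq_mul]
  have hdev : ∀ (z : Combo K) (i : Fin N),
      Y i z - Ybar K N Y z = f i - (∑ j, f j) / (N:ℝ) := by
    intro z i
    unfold Ybar
    rw [hsum z, hY i z]
    field_simp
    ring
  refine ⟨Ssq K N Y z0, ?_, ?_⟩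
  · intro z
    unfold Ssq
    congr 1
    apply Finset.sum_congr rfl
    intro i _
    rw [hdev z i, hdev z0 i]
  · intro A hA
    set M : ℝ := ((Assignments K N r).card : ℝ) with hM
    have hMne : M ≠ 0 := by
      have hne := assignments_nonempty (K := K) hr hN
      rw [hM]
      exact_mod_cast Finset.card_ne_zero.mpr hne
    set T : (Fin N → Combo K) → ℝ := fun ω => ∑ i, f i * gA K A (ω i) with hT
    set a : ℝ := 1 / ((r:ℝ) * 2 ^ (K-1)) with ha
    set Cst : ℝ := (∑ z : Combo K, gA K A z * cz z) / 2 ^ (K-1) with hCst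
    have hpoint : ∀ ω ∈ Assignments K N r, tauHat K N r Y A ω = Cst + a * T ω := by
      intro ω hω
      have hobs : ∀ z : Combo K, YbarObs K N r Y ω z
          = (∑ i, if ω i = z then f i else 0) / (r:ℝ) + cz z := by
        intro z
        unfold YbarObs
        have h2 : ∑ i : Fin N, (if ω i = z then cz z else 0) = (r:ℝ) * cz z := by
          rw [Finset.sum_ite, Finset.sum_const, Finset.sum_const_zero, add_zero, nsmul_eq_mul]
          rw [mem_assignments] at hω
          rw [hω z]
        have hsplit : (∑ i, if ω i = z then Y i z else 0)
            = (∑ i, if ω i = z then f i else 0) + (r:ℝ) * cz z := by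
          have hterm : ∀ i : Fin N, (if ω i = z then Y i z else 0)
              = (if ω i = z then f i else 0) + (if ω i = z then cz z else 0) := by
            intro i; by_cases h : ω i = z <;> simp [h, hY i z]
          rw [Finset.sum_congr rfl fun i _ => hterm i, Finset.sum_add_distrib, h2]
        rw [hsplit]
        field_simp
      have hswap : ∑ z : Combo K, gA K A z * (∑ i, if ω i = z then f i else 0) = T ω := by
        calc ∑ z : Combo K, gA K A z * (∑ i, if ω i = z then f i else 0)
            = ∑ z : Combo K, ∑ i, gA K A z * (if ω i = z then f i else 0) := by
              apply Finset.sum_congr rfl; intro z _; rw [Finset.mul_sum]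
          _ = ∑ i, ∑ z : Combo K, gA K A z * (if ω i = z then f i else 0) := Finset.sum_comm
          _ = ∑ i, f i * gA K A (ω i) := by
              apply Finset.sum_congr rfl
              intro i _
              simp [mul_ite, Finset.sum_ite_eq, Finset.sum_ite_eq', mul_comm]
      have expand : tauHat K N r Y A ω
          = (∑ z : Combo K, gA K A z *
              ((∑ i, if ω i = z then f i else 0) / (r:ℝ) + cz z)) / 2 ^ (K-1) := by
        unfold tauHat
        congr 1
        apply Finset.sum_congr rfl
        intro z _
        rw [hobs z]
      rw [expand]
      have hsplit2 : ∑ z : Combo K, gA K A z *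
            ((∑ i, if ω i = z then f i else 0) / (r:ℝ) + cz z)
          = (∑ z : Combo K, gA K A z * (∑ i, if ω i = z then f i else 0)) / (r:ℝ)
            + ∑ z : Combo K, gA K A z * cz z := by
        rw [Finset.sum_div]
        rw [← Finset.sum_add_distrib]
        apply Finset.sum_congr rfl
        intro z _
        ring
      rw [hsplit2, hswap, hCst, ha]
      field_simp
      ring
    rw [variance_congr hpoint, variance_affine hMne]
    have hET : expect K N r T = 0 := by
      unfold _root_.expect
      have hzero : ∑ ω ∈ Assignments K N r, T ω = 0 := by
        simp only [hT]
        rw [Finset.sum_comm]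
        apply Finset.sum_eq_zero
        intro i _
        rw [← Finset.mul_sum, sum_gA_omega hA i, mul_zero]
      rw [hzero, zero_div]
    have hEii : ∀ i : Fin N,
        ∑ ω ∈ Assignments K N r, gA K A (ω i) * gA K A (ω i) = M := by
      intro i
      rw [Finset.sum_congr rfl fun ω _ => gA_mul_self A (ω i), Finset.sum_const,
        nsmul_eq_mul, mul_one]
    have hTT : ((N:ℝ)-1) * ∑ ω ∈ Assignments K N r, (T ω)^2
        = M * ((N:ℝ) * (∑ i, (f i)^2) - (∑ i, f i)^2) := by
      have expand2 : ∑ ω ∈ Assignments K N r, (T ω)^2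
          = ∑ i, ∑ j, f i * f j *
              (∑ ω ∈ Assignments K N r, gA K A (ω i) * gA K A (ω j)) := by
        calc ∑ ω ∈ Assignments K N r, (T ω)^2
            = ∑ ω ∈ Assignments K N r, ∑ i, ∑ j,
                f i * f j * (gA K A (ω i) * gA K A (ω j)) := by
              apply Finset.sum_congr rfl
              intro ω _
              rw [sq, hT, Finset.sum_mul_sum]
              apply Finset.sum_congr rfl; intro i _
              apply Finset.sum_congr rfl; intro j _
              ring
          _ = ∑ i, ∑ j, ∑ ω ∈ Assignments K N r,
                f i * f j * (gA K A (ω i) * gA K A (ω j)) := by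
              rw [Finset.sum_comm]
              apply Finset.sum_congr rfl
              intro i _
              rw [Finset.sum_comm]
          _ = _ := by
              apply Finset.sum_congr rfl; intro i _
              apply Finset.sum_congr rfl; intro j _
              rw [← Finset.mul_sum]
      rw [expand2]
      have inner2 : ∀ i : Fin N,
          ((N:ℝ)-1) * ∑ j, f i * f j *
              (∑ ω ∈ Assignments K N r, gA K A (ω i) * gA K A (ω j))
          = (N:ℝ) * M * (f i)^2 - M * f i * (∑ j, f j) := by
        intro i
        have hoffd : ∀ j ∈ Finset.univ.erase i,
            ((N:ℝ)-1) * (∑ ω ∈ Assignments K N r, gA K A (ω i) * gA K A (ω j)) = -M :=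
          fun j hj => by
            have := sum_gA_pair hK hr hN hA (Finset.ne_of_mem_erase hj)
            rw [this]
        have herasef : ∑ j ∈ Finset.univ.erase i, f j = (∑ j, f j) - f i := by
          have h0 := Finset.add_sum_erase Finset.univ f (Finset.mem_univ i)
          linarith
        calc ((N:ℝ)-1) * ∑ j, f i * f j *
                (∑ ω ∈ Assignments K N r, gA K A (ω i) * gA K A (ω j))
            = ∑ j, f i * f j * (((N:ℝ)-1) *
                (∑ ω ∈ Assignments K N r, gA K A (ω i) * gA K A (ω j))) := by
              rw [Finset.mul_sum]
              apply Finset.sum_congr rfl; intro j _; ring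
          _ = f i * f i * (((N:ℝ)-1) *
                (∑ ω ∈ Assignments K N r, gA K A (ω i) * gA K A (ω i)))
              + ∑ j ∈ Finset.univ.erase i, f i * f j * (((N:ℝ)-1) *
                (∑ ω ∈ Assignments K N r, gA K A (ω i) * gA K A (ω j))) :=
              (Finset.add_sum_erase _ _ (Finset.mem_univ i)).symm
          _ = f i * f i * (((N:ℝ)-1) * M)
              + ∑ j ∈ Finset.univ.erase i, f i * (-M) * f j := by
              rw [hEii i]
              congr 1
              apply Finset.sum_congr rfl
              intro j hj
              rw [hoffd j hj]
              ring
          _ = f i * f i * (((N:ℝ)-1) * M) + f i * (-M) * ((∑ j, f j) - f i) := by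
              rw [← Finset.mul_sum, herasef]
          _ = (N:ℝ) * M * (f i)^2 - M * f i * (∑ j, f j) := by ring
      calc ((N:ℝ)-1) * ∑ i, ∑ j, f i * f j *
              (∑ ω ∈ Assignments K N r, gA K A (ω i) * gA K A (ω j))
          = ∑ i, ((N:ℝ)-1) * ∑ j, f i * f j *
              (∑ ω ∈ Assignments K N r, gA K A (ω i) * gA K A (ω j)) := Finset.mul_sum _ _ _
        _ = ∑ i, ((N:ℝ) * M * (f i)^2 - M * f i * (∑ j, f j)) :=
            Finset.sum_congr rfl fun i _ => inner2 i
        _ = (N:ℝ) * M * (∑ i, (f i)^2) - M * (∑ i, f i) * (∑ i, f i) := by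
            rw [Finset.sum_sub_distrib]
            congr 1
            · rw [← Finset.mul_sum]
            · have : ∀ i : Fin N, M * f i * (∑ j, f j) = (M * (∑ j, f j)) * f i :=
                fun i => by ring
              rw [Finset.sum_congr rfl fun i _ => this i, ← Finset.mul_sum]
        _ = M * ((N:ℝ) * (∑ i, (f i)^2) - (∑ i, f i)^2) := by ring
    have hS2sum : (N:ℝ) * ((N:ℝ)-1) * Ssq K N Y z0
        = (N:ℝ) * (∑ i, (f i)^2) - (∑ i, f i)^2 := by
      unfold Ssq
      rw [Finset.sum_congr rfl fun i _ => by rw [hdev z0 i]]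
      have hexp : ∑ i, (f i - (∑ j, f j)/(N:ℝ))^2
          = (∑ i, (f i)^2) - (∑ i, f i)^2/(N:ℝ) := by
        have hterm : ∀ i : Fin N, (f i - (∑ j, f j)/(N:ℝ))^2
            = (f i)^2 - (2*((∑ j, f j)/(N:ℝ)))*f i + ((∑ j, f j)/(N:ℝ))^2 :=
          fun i => by ring
        rw [Finset.sum_congr rfl fun i _ => hterm i, Finset.sum_add_distrib,
          Finset.sum_sub_distrib, ← Finset.mul_sum, Finset.sum_const,
          Finset.card_univ, Fintype.card_fin, nsmul_eq_mul]
        field_simp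
        ring
      rw [hexp]
      field_simp
    have hVT : variance K N r T = (N:ℝ) * Ssq K N Y z0 := by
      unfold _root_.variance
      rw [hET]
      have hsq : ∀ ω ∈ Assignments K N r, (T ω - 0)^2 = (T ω)^2 := fun ω _ => by ring
      rw [expect_congr hsq]
      unfold _root_.expect
      have hTsq : ∑ ω ∈ Assignments K N r, (T ω)^2 = M * ((N:ℝ) * Ssq K N Y z0) := by
        apply mul_left_cancel₀ hN1
        rw [hTT, ← hS2sum]
        ring
      rw [hTsq, hM]
      exact mul_div_cancel_left₀ _ hMne
    rw [hVT]
    have hNr : (N:ℝ) = (r:ℝ) * 2 ^ K := by rw [hN]; push_cast; ring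
    have h2k : (2:ℝ) ^ K = 2 * 2 ^ (K-1) := by
      conv_lhs => rw [show K = (K-1)+1 from (Nat.succ_pred_eq_of_pos hK).symm]
      ring
    have haN : a * (N:ℝ) = 2 := by
      rw [ha, hNr, h2k]
      field_simp
    have key : a^2 * (N:ℝ) = 4/(N:ℝ) := by
      rw [eq_div_iff hNne]
      nlinarith [haN]
    calc a^2 * ((N:ℝ) * Ssq K N Y z0) = (a^2 * (N:ℝ)) * Ssq K N Y z0 := by ring
      _ = 4/(N:ℝ) * Ssq K N Y z0 := by rw [key]
end
end
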